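/- arXiv:1910.11796 — 5 statements merged into one kernel-verified Lean document; each statement's English description precedes it below -/
import Mathlib

section
/- Fix i ∈ {1,…,d}, n ∈ ℕ and an (n,i)-layer 𝓛. Let x, y ∈ ℝ^d and assume that (a) the line segment L(x,y) passes through 𝓛, and (b) for every j ≠ i there exist (n,j)-layers 𝓛_j^1 and 𝓛_j^2 with L(x,y) ⊂ 𝓛_j^1 ∪ 𝓛_j^2. Let ℓ be the line containing L(x,y). Then there exists a cube Q ∈ 𝒬_n with Q ⊂ 𝓛 such that: (i) ℓ intersects Q very properly in direction i; (ii) ℓ intersects Q properly and ℓ ∩ Q = L(x,y) ∩ Q; (iii) Q is a neighbour of every cube in 𝒬_n contained in 𝓛 that L(x,y) intersects in a set of positive length. -/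
open MeasureTheory Set
open scoped ENNReal NNReal

noncomputable section

namespace FracPerc

/-- Euclidean space `ℝ^d`. -/
abbrev Euc (d : ℕ) := EuclideanSpace ℝ (Fin d)

/-- View a coordinate function as a point of `ℝ^d`. -/
def ptOf (d : ℕ) (f : Fin d → ℝ) : Euc d := WithLp.toLp 2 f

/-- The set of vertices of the `N^d`-branching tree: finite words over `Fin (N^d)`. -/
abbrev Word (d N : ℕ) : Type := Σ n : ℕ, Fin n → Fin (N ^ d)

/-- The sample space `Ω` of fractal percolation. -/
abbrev Omega (d N : ℕ) : Type := Word d N → Bool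

/-- The Bernoulli measure `(1-p)·δ_false + p·δ_true` on `Bool`. -/
def bernoulliMeasure (p : ℝ) : Measure Bool :=
  ENNReal.ofReal (1 - p) • Measure.dirac false + ENNReal.ofReal p • Measure.dirac true

/-- `P` is the percolation measure `ℙ_p = ((1-p)δ_0 + pδ_1)^{V}` on `Ω = {0,1}^V`:
it is the unique probability measure under which the coordinates are independent and
Bernoulli(`p`)-distributed. -/
def IsPercMeasure (d N : ℕ) (p : ℝ) (P : Measure (Omega d N)) : Prop :=
  IsProbabilityMeasure P ∧
    ProbabilityTheory.iIndepFun
      (fun w : Word d N => fun ω : Omega d N => ω w) P ∧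
    ∀ w : Word d N, P.map (fun ω : Omega d N => ω w) = bernoulliMeasure p

/-- The natural base-`N` coding bijection between words of length `n` and grid positions. -/
def coding (d N n : ℕ) : (Fin n → Fin (N ^ d)) ≃ (Fin d → Fin (N ^ n)) :=
  (Equiv.arrowCongr (Equiv.refl (Fin n)) finFunctionFinEquiv.symm).trans
    ((Equiv.piComm fun (_ : Fin n) (_ : Fin d) => Fin N).trans
      (Equiv.arrowCongr (Equiv.refl (Fin d)) finFunctionFinEquiv))

/-- The grid cube of level `n` at position `l`, an element of `𝒬_n`. -/
def gridCube (d N n : ℕ) (l : Fin d → Fin (N ^ n)) : Set (Euc d) :=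
  {x | ∀ i, (l i : ℝ) / (N : ℝ) ^ n ≤ x i ∧ x i ≤ ((l i : ℝ) + 1) / (N : ℝ) ^ n}

/-- The cube of level `n` at position `l` is chosen in the realisation `ω`. -/
def chosen (d N : ℕ) (ω : Omega d N) (n : ℕ) (l : Fin d → Fin (N ^ n)) : Prop :=
  ω ⟨n, (coding d N n).symm l⟩ = true

/-- The fractal percolation set `E(ω)`. -/
def percSet (d N : ℕ) (ω : Omega d N) : Set (Euc d) :=
  ⋂ n : ℕ, ⋃ l : Fin d → Fin (N ^ n), ⋃ _ : chosen d N ω n l, gridCube d N n l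

/-! ### Geometry -/

/-- The orthogonal projection onto the `i`-th coordinate axis. -/
def proj (d : ℕ) (i : Fin d) : Euc d → ℝ := fun x => x i

/-- The line through `x` with direction `v`. -/
def lineThrough (d : ℕ) (x v : Euc d) : Set (Euc d) := {y | ∃ t : ℝ, y = x + t • v}

/-- `ℓ` is a line in `ℝ^d`. -/
def IsLine (d : ℕ) (ℓ : Set (Euc d)) : Prop := ∃ x v, v ≠ 0 ∧ ℓ = lineThrough d x v

/-- Two parallel lines. -/
def Parallel (d : ℕ) (ℓ ℓ' : Set (Euc d)) : Prop :=
  ∃ x x' v, v ≠ 0 ∧ ℓ = lineThrough d x v ∧ ℓ' = lineThrough d x' v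

/-- `i` is a principle direction of the line `ℓ`: it maximises the length of the
projections of subsegments of `ℓ`. -/
def PrincipleDir (d : ℕ) (i : Fin d) (ℓ : Set (Euc d)) : Prop :=
  ∀ x ∈ ℓ, ∀ y ∈ ℓ, ∀ j : Fin d, |y j - x j| ≤ |y i - x i|

/-- `ℓ` intersects the set `A` properly at level `n`, in direction `i`:
`H¹(Π_i(ℓ ∩ A)) ≥ d⁻¹ N⁻ⁿ`. -/
def ProperlyIn (d N : ℕ) (i : Fin d) (ℓ A : Set (Euc d)) (n : ℕ) : Prop :=
  ENNReal.ofReal ((d : ℝ)⁻¹ * ((N : ℝ) ^ n)⁻¹) ≤ μH[1] (proj d i '' (ℓ ∩ A))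

/-- `ℓ` intersects the set `A` properly at level `n`. -/
def Properly (d N : ℕ) (ℓ A : Set (Euc d)) (n : ℕ) : Prop :=
  ∃ i, PrincipleDir d i ℓ ∧ ProperlyIn d N i ℓ A n

/-- `ℓ` intersects `A` very properly in direction `i` at level `n`:
`Π_i(ℓ ∩ A)` contains an interval `[k d⁻¹N⁻ⁿ, (k+1) d⁻¹N⁻ⁿ]` with `k ∈ ℤ`. -/
def VeryProperly (d N : ℕ) (i : Fin d) (ℓ A : Set (Euc d)) (n : ℕ) : Prop :=
  ∃ k : ℤ, Icc ((k : ℝ) * ((d : ℝ)⁻¹ * ((N : ℝ) ^ n)⁻¹))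
      (((k : ℝ) + 1) * ((d : ℝ)⁻¹ * ((N : ℝ) ^ n)⁻¹)) ⊆ proj d i '' (ℓ ∩ A)

/-- The `(n,i)`-layer `Π_i⁻¹([k N⁻ⁿ, (k+1) N⁻ⁿ])`. -/
def nLayer (d N n : ℕ) (i : Fin d) (k : ℕ) : Set (Euc d) :=
  {x | x i ∈ Icc ((k : ℝ) / (N : ℝ) ^ n) (((k : ℝ) + 1) / (N : ℝ) ^ n)}

/-- The points `x` and `y` lie in different connected components of the complement of the
interior of `L`; this is what it means for a curve (or segment) with endpoints `x`, `y` to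
pass through the layer `L`. -/
def PassesThroughPts (d : ℕ) (x y : Euc d) (L : Set (Euc d)) : Prop :=
  x ∈ (interior L)ᶜ ∧ y ∈ (interior L)ᶜ ∧
    connectedComponentIn (interior L)ᶜ x ≠ connectedComponentIn (interior L)ᶜ y

/-- The segment `L(x,y)` passes through the layer `L`. -/
def SegPassesThrough (d : ℕ) (x y : Euc d) (L : Set (Euc d)) : Prop :=
  PassesThroughPts d x y L

/-- The level-`m` cubes at positions `l`, `l'` are `i`-neighbours: they intersect and lie in
a common `(m,i)`-layer. -/
def INeighbour (d N m : ℕ) (i : Fin d) (l l' : Fin d → Fin (N ^ m)) : Prop :=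
  (gridCube d N m l ∩ gridCube d N m l').Nonempty ∧
    ∃ k : ℕ, gridCube d N m l ⊆ nLayer d N m i k ∧ gridCube d N m l' ⊆ nLayer d N m i k

/-- The level-`m` cube at position `l` is strongly `i`-deleted: no `i`-neighbour of it
(including itself) is chosen. -/
def StronglyIDeleted (d N : ℕ) (ω : Omega d N) (m : ℕ) (i : Fin d)
    (l : Fin d → Fin (N ^ m)) : Prop :=
  ∀ l', INeighbour d N m i l l' → ¬ chosen d N ω m l'

/-- Indices of `(m,i)`-layers meeting `A` in a set of positive length. -/
def posLayers (d N m : ℕ) (i : Fin d) (A : Set (Euc d)) : Set ℕ :=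
  {k | 0 < μH[1] (A ∩ nLayer d N m i k)}

/-- `k'` indexes one of the first two or last two `(m,i)`-layers (in the natural order)
meeting `A` in positive length. -/
def EdgeLayer (d N m : ℕ) (i : Fin d) (A : Set (Euc d)) (k' : ℕ) : Prop :=
  k' ∈ posLayers d N m i A ∧
    (({k ∈ posLayers d N m i A | k < k'}).ncard ≤ 1 ∨
      ({k ∈ posLayers d N m i A | k' < k}).ncard ≤ 1)

/-- The region `A` (a cube of level `n`) is `m₀`-good for the line `ℓ` with principle
direction `i`: there is a strongly `i`-deleted level-`(n+m₀)` cube inside `A`, not contained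
in the first two or last two `(n+m₀,i)`-layers meeting `ℓ ∩ A` in positive length,
which `ℓ` intersects properly. -/
def M0GoodForDir (d N : ℕ) (ω : Omega d N) (n m0 : ℕ) (i : Fin d) (ℓ A : Set (Euc d)) : Prop :=
  ∃ l' : Fin d → Fin (N ^ (n + m0)),
    gridCube d N (n + m0) l' ⊆ A ∧
    StronglyIDeleted d N ω (n + m0) i l' ∧
    (∀ k', EdgeLayer d N (n + m0) i (ℓ ∩ A) k' →
      ¬ gridCube d N (n + m0) l' ⊆ nLayer d N (n + m0) i k') ∧
    Properly d N ℓ (gridCube d N (n + m0) l') (n + m0)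

/-- The family `Γ(Q,m₀)` of lines through a vertex `v` of the cube `Q` (with corner `corner`
and side length `side`) and a grid point of spacing `side/N^{m₀}` of a `(d-1)`-face `F` of `Q`
not containing `v`. -/
def cubeGamma (d N : ℕ) (corner : Fin d → ℝ) (side : ℝ) (m0 : ℕ) : Set (Set (Euc d)) :=
  {ℓ | ∃ (i : Fin d) (ε : Bool) (vs : Fin d → Bool) (g : Fin d → ℝ),
    vs i = !ε ∧
    g i = corner i + (if ε then side else 0) ∧
    (∀ j, j ≠ i → ∃ z : ℕ, z ≤ N ^ m0 ∧ g j = corner j + (z : ℝ) * side / (N : ℝ) ^ m0) ∧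
    ℓ = lineThrough d (ptOf d fun j => corner j + (if vs j then side else 0))
      (ptOf d g - ptOf d fun j => corner j + (if vs j then side else 0))}

/-- The region `A` (a possibly shrunk/shifted cube of level `n` with corner `corner`) is
`m₀`-good: it is `m₀`-good for every line which intersects `A` properly and is parallel to
some line of `Γ(Q,m₀)`. -/
def M0GoodA (d N : ℕ) (ω : Omega d N) (n m0 : ℕ) (corner : Fin d → ℝ) (A : Set (Euc d)) :
    Prop :=
  ∀ (ℓ : Set (Euc d)) (i : Fin d), IsLine d ℓ →
    (∃ ℓ' ∈ cubeGamma d N corner (((N : ℝ) ^ n)⁻¹) m0, Parallel d ℓ ℓ') →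
    PrincipleDir d i ℓ → ProperlyIn d N i ℓ A n →
    M0GoodForDir d N ω n m0 i ℓ A

/-- The level-`n` cube at position `l` is `m₀`-good. -/
def M0Good (d N : ℕ) (ω : Omega d N) (n m0 : ℕ) (l : Fin d → Fin (N ^ n)) : Prop :=
  M0GoodA d N ω n m0 (fun j => (l j : ℝ) / (N : ℝ) ^ n) (gridCube d N n l)

/-- The cube `K_Q`: concentric with `Q`, five times the side length. -/
def KCube (d N n : ℕ) (l : Fin d → Fin (N ^ n)) : Set (Euc d) :=
  {x | ∀ i, ((l i : ℝ) - 2) / (N : ℝ) ^ n ≤ x i ∧ x i ≤ ((l i : ℝ) + 3) / (N : ℝ) ^ n}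

/-! ### Shifted grids -/

/-- The set `S = {-1,1}^d ∪ {0}` of shift directions. -/
def Shifts (d : ℕ) : Set (Fin d → ℤ) := {s | ∀ i, s i = 1 ∨ s i = -1} ∪ {0}

/-- The translation vector `Σ_i s_i N^{-(n+n'+m₀)} e_i`. -/
def shiftVec (d N n nn m0 : ℕ) (s : Fin d → ℤ) : Fin d → ℝ :=
  fun i => (s i : ℝ) * ((N : ℝ) ^ (n + nn + m0))⁻¹

/-- A level-`n` grid cube translated by the vector `t`: an element of a shifted grid. -/
def shiftCube (d N n : ℕ) (t : Fin d → ℝ) (l : Fin d → Fin (N ^ n)) : Set (Euc d) :=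
  {x | ∀ i, (l i : ℝ) / (N : ℝ) ^ n + t i ≤ x i ∧ x i ≤ ((l i : ℝ) + 1) / (N : ℝ) ^ n + t i}

/-- The concentric cube `int_{m₀} Q = (1 - 2N^{-m₀})Q` of a (shifted) level-`n` cube. -/
def intCube (d N n m0 : ℕ) (t : Fin d → ℝ) (l : Fin d → Fin (N ^ n)) : Set (Euc d) :=
  {x | ∀ i, (l i : ℝ) / (N : ℝ) ^ n + t i + ((N : ℝ) ^ (n + m0))⁻¹ ≤ x i ∧
    x i ≤ ((l i : ℝ) + 1) / (N : ℝ) ^ n + t i - ((N : ℝ) ^ (n + m0))⁻¹}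

/-- The (shifted) level-`n` cube at position `l`, translated by `t`, is independently
`m₀`-good. -/
def IndepM0Good (d N : ℕ) (ω : Omega d N) (n m0 : ℕ) (t : Fin d → ℝ)
    (l : Fin d → Fin (N ^ n)) : Prop :=
  M0GoodA d N ω n m0 (fun j => (l j : ℝ) / (N : ℝ) ^ n + t j) (intCube d N n m0 t l)

/-! ### Iterated goodness along a sequence of levels -/

/-- `GoodL d N ω c m0 k L n l` says that the level-`n` cube at position `l` is
`(k, L, c, m₀)`-good, for a strictly decreasing sequence `L` of levels with `L k = 0`. -/
def GoodL (d N : ℕ) (ω : Omega d N) (c m0 : ℕ) :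
    (k : ℕ) → (L : ℕ → ℕ) → (n : ℕ) → (Fin d → Fin (N ^ n)) → Prop
  | 0, _, n, l => M0Good d N ω n m0 l
  | k + 1, L, n, l =>
      ({l' : Fin d → Fin (N ^ (n + L k)) |
        gridCube d N (n + L k) l' ⊆ gridCube d N n l ∧
          ¬ GoodL d N ω c m0 k (fun j => L j - L k) (n + L k) l'}).ncard ≤ c

/-- Independently `(k, L, c, m₀)`-good cubes of the shifted grids (the shift vector `t`
is the common absolute translation of the nested shifted grids). -/
def IndepGoodL (d N : ℕ) (ω : Omega d N) (c m0 : ℕ) :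
    (k : ℕ) → (L : ℕ → ℕ) → (n : ℕ) → (t : Fin d → ℝ) → (Fin d → Fin (N ^ n)) → Prop
  | 0, _, n, t, l => IndepM0Good d N ω n m0 t l
  | k + 1, L, n, t, l =>
      ({l' : Fin d → Fin (N ^ (n + L k)) |
        shiftCube d N (n + L k) t l' ⊆ shiftCube d N n t l ∧
          ¬ IndepGoodL d N ω c m0 k (fun j => L j - L k) (n + L k) t l'}).ncard ≤ c

/-! ### Curves, Hölder conditions, tightness, gaps -/

/-- The maximum metric `d_∞` on `ℝ^d`. -/
def dmax (d : ℕ) (x y : Euc d) : ℝ := ⨆ i, |x i - y i|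

/-- The `d_∞`-distance from a point to a set. -/
def dmaxSet (d : ℕ) (x : Euc d) (A : Set (Euc d)) : ℝ := sInf (dmax d x '' A)

/-- `γ` (as a curve on `I`) is `(α,η,R)`-tight at `t`. -/
def TightAt (d : ℕ) (γ : ℝ → Euc d) (I : Set ℝ) (α η R t : ℝ) : Prop :=
  ∀ r : ℝ, 0 < r → r ≤ R → η * (2 * r) ^ α ≤ Metric.diam (γ '' (Icc (t - r) (t + r) ∩ I))

/-- `γ` has an `ε`-gap of scale `r` at `t` (with respect to `ω`). -/
def GapAtScale (d N : ℕ) (ω : Omega d N) (γ : ℝ → Euc d) (I : Set ℝ) (ε t r : ℝ) : Prop :=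
  ∃ ta tb : ℝ, ta ∈ Icc (t - r) (t + r) ∩ I ∧ tb ∈ Icc (t - r) (t + r) ∩ I ∧ ta < tb ∧
    (∀ u ∈ Ioo ta tb, γ u ∉ percSet d N ω) ∧
    ε * Metric.diam (γ '' (Icc (t - r) (t + r) ∩ I)) ≤ dist (γ ta) (γ tb)

end FracPerc

open FracPerc


section ProofAux
open FracPerc

private lemma euc_add_smul_apply {d : ℕ} (x u : Euc d) (t : ℝ) (j : Fin d) :
    (x + t • u) j = x j + t * u j := by
  simp [PiLp.add_apply, PiLp.smul_apply, smul_eq_mul]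

private lemma mem_seg {d : ℕ} (x y : Euc d) (t : ℝ) (h0 : 0 ≤ t) (h1 : t ≤ 1) :
    x + t • (y - x) ∈ segment ℝ x y := by
  rw [segment_eq_image']; exact ⟨t, ⟨h0, h1⟩, rfl⟩

private lemma seg_coord {d : ℕ} {x y z : Euc d} (hz : z ∈ segment ℝ x y) :
    ∃ t : ℝ, 0 ≤ t ∧ t ≤ 1 ∧ ∀ j, z j = x j + t * (y j - x j) := by
  rw [segment_eq_image'] at hz
  obtain ⟨t, ⟨h0, h1⟩, rfl⟩ := hz
  exact ⟨t, h0, h1, fun j => by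
    show (x + t • (y - x)) j = _
    rw [euc_add_smul_apply, PiLp.sub_apply]⟩

private lemma seg_attain {d : ℕ} {x y : Euc d} {j : Fin d} {v : ℝ}
    (h1 : x j < v) (h2 : v < y j) :
    ∃ z ∈ segment ℝ x y, z j = v := by
  have hD : 0 < y j - x j := by linarith
  refine ⟨x + ((v - x j) / (y j - x j)) • (y - x),
    mem_seg _ _ _ (div_nonneg (by linarith) hD.le) ((div_le_one hD).2 (by linarith)), ?_⟩
  show (x + ((v - x j) / (y j - x j)) • (y - x)) j = v
  rw [euc_add_smul_apply, PiLp.sub_apply]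
  field_simp
  ring

private lemma exists_two_points {d : ℕ} {S : Set (Euc d)} (hpos : 0 < μH[1] S) :
    ∃ z ∈ S, ∃ z' ∈ S, z ≠ z' := by
  haveI : NullSingletonClass (μH[1] : Measure (Euc d)) :=
    MeasureTheory.Measure.noAtoms_hausdorff _ one_pos
  by_contra hcon
  push_neg at hcon
  exact absurd (Set.Subsingleton.measure_zero hcon (μH[1] : Measure (Euc d))) hpos.ne'

/-- The conclusion of Statement 4, abstracted over the segment. -/
private abbrev Concl (d N n : ℕ) (i : Fin d) (k : ℕ) (S ℓ : Set (Euc d)) : Prop :=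
  ∃ l : Fin d → Fin (N ^ n),
    gridCube d N n l ⊆ nLayer d N n i k ∧
    VeryProperly d N i ℓ (gridCube d N n l) n ∧
    Properly d N ℓ (gridCube d N n l) n ∧
    ℓ ∩ gridCube d N n l = S ∩ gridCube d N n l ∧
    ∀ l' : Fin d → Fin (N ^ n), gridCube d N n l' ⊆ nLayer d N n i k →
      0 < μH[1] (S ∩ gridCube d N n l') →
      (gridCube d N n l ∩ gridCube d N n l').Nonempty

private lemma window_of_layers {d N n : ℕ} {x y : Euc d} {j : Fin d}
    {k1 k2 : ℕ} (hord : k1 ≤ k2) (hk2 : k2 < N ^ n) (hNR : (0:ℝ) < (N:ℝ) ^ n)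
    (hseg2 : segment ℝ x y ⊆ nLayer d N n j k1 ∪ nLayer d N n j k2) :
    ∃ m w : ℕ, (w = 1 ∨ w = 2) ∧ m + w ≤ N ^ n ∧
      ∀ z ∈ segment ℝ x y,
        (m : ℝ) * ((N:ℝ) ^ n)⁻¹ ≤ z j ∧ z j ≤ ((m : ℝ) + (w : ℝ)) * ((N:ℝ) ^ n)⁻¹ := by
  set δ : ℝ := ((N:ℝ) ^ n)⁻¹ with hδdef
  have hδ : 0 < δ := inv_pos.2 hNR
  have hmem : ∀ z ∈ segment ℝ x y,
      ((k1:ℝ) * δ ≤ z j ∧ z j ≤ ((k1:ℝ) + 1) * δ) ∨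
      ((k2:ℝ) * δ ≤ z j ∧ z j ≤ ((k2:ℝ) + 1) * δ) := by
    intro z hz
    rcases hseg2 hz with h | h
    · left
      simp only [nLayer, mem_setOf_eq, mem_Icc, div_eq_mul_inv] at h
      exact h
    · right
      simp only [nLayer, mem_setOf_eq, mem_Icc, div_eq_mul_inv] at h
      exact h
  by_cases hadj : k2 ≤ k1 + 1
  · refine ⟨k1, k2 + 1 - k1, by omega, by omega, fun z hz => ?_⟩
    have hcast : ((k2 + 1 - k1 : ℕ) : ℝ) = (k2:ℝ) + 1 - (k1:ℝ) := by
      have : (k1:ℝ) ≤ (k2:ℝ) + 1 := by exact_mod_cast Nat.le_succ_of_le hord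
      rw [Nat.cast_sub (by omega : k1 ≤ k2 + 1)]
      push_cast
      ring
    have hk12 : (k1:ℝ) ≤ (k2:ℝ) := by exact_mod_cast hord
    rw [hcast]
    rcases hmem z hz with h | h
    · exact ⟨h.1, by nlinarith [h.2]⟩
    · exact ⟨by nlinarith [h.1], by nlinarith [h.2]⟩
  · have hgap : (k1:ℝ) + 2 ≤ (k2:ℝ) := by exact_mod_cast (by omega : k1 + 2 ≤ k2)
    have hx := hmem x (left_mem_segment ℝ x y)
    have hy := hmem y (right_mem_segment ℝ x y)
    have hbet : ∀ z ∈ segment ℝ x y, min (x j) (y j) ≤ z j ∧ z j ≤ max (x j) (y j) := by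
      intro z hz
      obtain ⟨t, h0, h1, hc⟩ := seg_coord hz
      rcases le_total (x j) (y j) with hxy | hxy
      · rw [min_eq_left hxy, max_eq_right hxy, hc j]
        constructor <;> nlinarith
      · rw [min_eq_right hxy, max_eq_left hxy, hc j]
        constructor <;> nlinarith
    have hcell : ∀ c : ℕ, ((c:ℝ) * δ ≤ x j ∧ x j ≤ ((c:ℝ) + 1) * δ) →
        ((c:ℝ) * δ ≤ y j ∧ y j ≤ ((c:ℝ) + 1) * δ) → c + 1 ≤ N ^ n →
        ∃ m w : ℕ, (w = 1 ∨ w = 2) ∧ m + w ≤ N ^ n ∧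
          ∀ z ∈ segment ℝ x y, (m : ℝ) * δ ≤ z j ∧ z j ≤ ((m : ℝ) + (w : ℝ)) * δ := by
      intro c hxc hyc hcb
      refine ⟨c, 1, Or.inl rfl, by omega, fun z hz => ?_⟩
      have h1 : (c:ℝ) * δ ≤ min (x j) (y j) := le_min hxc.1 hyc.1
      have h2 : max (x j) (y j) ≤ ((c:ℝ) + 1) * δ := max_le hxc.2 hyc.2
      have := hbet z hz
      push_cast
      constructor <;> linarith [this.1, this.2]
    rcases hx with hx1 | hx2 <;> rcases hy with hy1 | hy2
    · exact hcell k1 hx1 hy1 (by omega)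
    · exfalso
      have hxv : x j < ((k1:ℝ) + 1) * δ + δ / 2 := by linarith [hx1.2]
      have hvy : ((k1:ℝ) + 1) * δ + δ / 2 < y j := by nlinarith [hy2.1]
      obtain ⟨z, hzseg, hzj⟩ := seg_attain hxv hvy
      rcases hmem z hzseg with h | h
      · nlinarith [h.2]
      · nlinarith [h.1]
    · exfalso
      have hyv : y j < ((k1:ℝ) + 1) * δ + δ / 2 := by linarith [hy1.2]
      have hvx : ((k1:ℝ) + 1) * δ + δ / 2 < x j := by nlinarith [hx2.1]
      obtain ⟨z, hzseg, hzj⟩ := seg_attain hyv hvx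
      rw [← segment_symm] at hzseg
      rcases hmem z hzseg with h | h
      · nlinarith [h.2]
      · nlinarith [h.1]
    · exact hcell k2 hx2 hy2 (by omega)

set_option maxHeartbeats 4000000 in
private lemma key (d N : ℕ) (hd : 2 ≤ d) (hN : 2 ≤ N) (n : ℕ) (i : Fin d) (k : ℕ)
    (hk : k < N ^ n) (x y : Euc d)
    (hxi : x i ≤ (k : ℝ) * ((N:ℝ) ^ n)⁻¹)
    (hyi : ((k : ℝ) + 1) * ((N:ℝ) ^ n)⁻¹ ≤ y i)
    (hb : ∀ j : Fin d, j ≠ i → ∃ k1 k2 : ℕ, k1 < N ^ n ∧ k2 < N ^ n ∧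
      segment ℝ x y ⊆ nLayer d N n j k1 ∪ nLayer d N n j k2)
    (ℓ : Set (Euc d)) (hline : IsLine d ℓ) (hsub : segment ℝ x y ⊆ ℓ) :
    Concl d N n i k (segment ℝ x y) ℓ := by
  set δ : ℝ := ((N:ℝ) ^ n)⁻¹ with hδdef
  have hNR : (0:ℝ) < (N:ℝ) ^ n := by
    have : (0:ℝ) < (N:ℝ) := by exact_mod_cast (by omega : 0 < N)
    positivity
  have hδ : 0 < δ := inv_pos.2 hNR
  have hNn1 : 1 ≤ N ^ n := Nat.one_le_pow n N (by omega)
  have hdR : (0:ℝ) < (d:ℝ) := by exact_mod_cast (by omega : 0 < d)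
  have hui : δ ≤ y i - x i := by linarith
  have hui0 : (0:ℝ) < y i - x i := lt_of_lt_of_le hδ hui
  set P : ℝ → Euc d := fun s => x + ((s - x i) / (y i - x i)) • (y - x) with hPdef
  have hPj : ∀ s (j : Fin d), P s j = x j + ((s - x i) / (y i - x i)) * (y j - x j) := by
    intro s j
    show (x + ((s - x i) / (y i - x i)) • (y - x)) j = _
    rw [euc_add_smul_apply, PiLp.sub_apply]
  have hPi : ∀ s, P s i = s := by
    intro s; rw [hPj]; field_simp; ring
  have hPseg : ∀ s, (k:ℝ) * δ ≤ s → s ≤ ((k:ℝ) + 1) * δ → P s ∈ segment ℝ x y := by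
    intro s h1 h2
    exact mem_seg x y _ (div_nonneg (by linarith) hui0.le) ((div_le_one hui0).2 (by linarith))
  have hPdiff : ∀ (j : Fin d) s s', P s' j - P s j = ((s' - s) * (y j - x j)) / (y i - x i) := by
    intro j s s'; rw [hPj, hPj]; field_simp; ring
  -- windows in the non-principle directions
  have hwin : ∀ j : Fin d, ∃ m w : ℕ, (w = 1 ∨ w = 2) ∧ m + w ≤ N ^ n ∧
      (j ≠ i → ∀ z ∈ segment ℝ x y, (m : ℝ) * δ ≤ z j ∧ z j ≤ ((m : ℝ) + (w : ℝ)) * δ) := by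
    intro j
    by_cases hji : j = i
    · exact ⟨0, 1, Or.inl rfl, by omega, fun h => absurd hji h⟩
    · obtain ⟨k1, k2, hk1, hk2, hseg2⟩ := hb j hji
      rcases le_total k1 k2 with hord | hord
      · obtain ⟨m, w, h1, h2, h3⟩ := window_of_layers hord hk2 hNR hseg2
        exact ⟨m, w, h1, h2, fun _ => h3⟩
      · rw [union_comm] at hseg2
        obtain ⟨m, w, h1, h2, h3⟩ := window_of_layers hord hk1 hNR hseg2
        exact ⟨m, w, h1, h2, fun _ => h3⟩
  choose m w hw1 hw2 hw3 using hwin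
  -- pigeonhole: a sub-interval of the crossing avoiding all cell boundaries
  set σ : Fin d → ℝ := fun j =>
    x i + (((m j : ℝ) + 1) * δ - x j) * (y i - x i) / (y j - x j) with hσdef
  have hdisj : ∀ (r r' : Fin d) (s : ℝ),
      s ∈ Ioo ((k:ℝ) * δ + ((r:ℕ):ℝ) * (δ / d)) ((k:ℝ) * δ + (((r:ℕ):ℝ) + 1) * (δ / d)) →
      s ∈ Ioo ((k:ℝ) * δ + ((r':ℕ):ℝ) * (δ / d)) ((k:ℝ) * δ + (((r':ℕ):ℝ) + 1) * (δ / d)) →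
      r = r' := by
    intro r r' s hs hs'
    have hδd : (0:ℝ) < δ / d := by positivity
    obtain ⟨ha1, ha2⟩ := hs
    obtain ⟨hb1, hb2⟩ := hs'
    have h1 : ((r:ℕ):ℝ) < ((r':ℕ):ℝ) + 1 :=
      (mul_lt_mul_iff_of_pos_right hδd).1 (by linarith)
    have h2 : ((r':ℕ):ℝ) < ((r:ℕ):ℝ) + 1 :=
      (mul_lt_mul_iff_of_pos_right hδd).1 (by linarith)
    have h1' : (r:ℕ) < (r':ℕ) + 1 := by exact_mod_cast h1
    have h2' : (r':ℕ) < (r:ℕ) + 1 := by exact_mod_cast h2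
    exact Fin.ext (by omega)
  set rIdx : Fin d → Fin d := fun j =>
    if h : ∃ r : Fin d, σ j ∈
        Ioo ((k:ℝ) * δ + ((r:ℕ):ℝ) * (δ / d)) ((k:ℝ) * δ + (((r:ℕ):ℝ) + 1) * (δ / d))
    then h.choose else i with hrIdxdef
  obtain ⟨r, hrT⟩ : ∃ r : Fin d, r ∉ (Finset.univ.erase i).image rIdx := by
    by_contra hcon
    push_neg at hcon
    have hsub2 : (Finset.univ : Finset (Fin d)) ⊆ (Finset.univ.erase i).image rIdx :=
      fun z _ => hcon z
    have h1 := Finset.card_le_card hsub2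
    have h2 := Finset.card_image_le (f := rIdx) (s := Finset.univ.erase i)
    rw [Finset.card_erase_of_mem (Finset.mem_univ i)] at h2
    simp only [Finset.card_univ, Fintype.card_fin] at h1 h2
    omega
  set s1 : ℝ := (k:ℝ) * δ + ((r:ℕ):ℝ) * (δ / d) with hs1def
  set s2 : ℝ := (k:ℝ) * δ + (((r:ℕ):ℝ) + 1) * (δ / d) with hs2def
  have hδd : (0:ℝ) < δ / d := by positivity
  have hs12 : s1 < s2 := by rw [hs1def, hs2def]; nlinarith
  have hs1a : (k:ℝ) * δ ≤ s1 := by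
    rw [hs1def]; exact le_add_of_nonneg_right (by positivity)
  have hs2b : s2 ≤ ((k:ℝ) + 1) * δ := by
    rw [hs2def]
    have hr1 : ((r:ℕ):ℝ) + 1 ≤ (d:ℝ) := by exact_mod_cast r.2
    have : (((r:ℕ):ℝ) + 1) * (δ / d) ≤ (d:ℝ) * (δ / d) :=
      mul_le_mul_of_nonneg_right hr1 hδd.le
    have hdd : (d:ℝ) * (δ / d) = δ := by field_simp
    nlinarith
  have hrgood : ∀ j : Fin d, j ≠ i → σ j ∉ Ioo s1 s2 := by
    intro j hji hmem
    apply hrT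
    have hex : ∃ r' : Fin d, σ j ∈
        Ioo ((k:ℝ) * δ + ((r':ℕ):ℝ) * (δ / d)) ((k:ℝ) * δ + (((r':ℕ):ℝ) + 1) * (δ / d)) :=
      ⟨r, hmem⟩
    have heq : rIdx j = r := by
      rw [hrIdxdef]
      simp only [dif_pos hex]
      exact hdisj _ _ _ hex.choose_spec hmem
    exact Finset.mem_image.2 ⟨j, Finset.mem_erase.2 ⟨hji, Finset.mem_univ j⟩, heq⟩
  -- between-ness of P on [s1, s2]
  have hbet : ∀ (j : Fin d) (s : ℝ), s1 ≤ s → s ≤ s2 →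
      (min (P s1 j) (P s2 j) ≤ P s j ∧ P s j ≤ max (P s1 j) (P s2 j)) := by
    intro j s h1 h2
    rcases le_total 0 (y j - x j) with hsg | hsg
    · have e1 : 0 ≤ P s j - P s1 j := by
        rw [hPdiff]; exact div_nonneg (mul_nonneg (by linarith) hsg) hui0.le
      have e2 : 0 ≤ P s2 j - P s j := by
        rw [hPdiff]; exact div_nonneg (mul_nonneg (by linarith) hsg) hui0.le
      exact ⟨le_trans (min_le_left _ _) (by linarith), le_trans (by linarith) (le_max_right _ _)⟩
    · have e1 : 0 ≤ P s1 j - P s j := by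
        rw [hPdiff]; exact div_nonneg (by nlinarith) hui0.le
      have e2 : 0 ≤ P s j - P s2 j := by
        rw [hPdiff]; exact div_nonneg (by nlinarith) hui0.le
      exact ⟨le_trans (min_le_right _ _) (by linarith), le_trans (by linarith) (le_max_left _ _)⟩
  -- choice of the cells of the cube
  have hcell : ∀ j : Fin d, ∃ c : ℕ, c + 1 ≤ N ^ n ∧ (j = i → c = k) ∧
      (j ≠ i → (m j ≤ c ∧ c + 1 ≤ m j + w j)) ∧
      ∀ s, s1 ≤ s → s ≤ s2 → (c:ℝ) * δ ≤ P s j ∧ P s j ≤ ((c:ℝ) + 1) * δ := by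
    intro j
    by_cases hji : j = i
    · subst hji
      refine ⟨k, hk, fun _ => rfl, fun h => absurd rfl h, fun s h1 h2 => ?_⟩
      rw [hPi]
      exact ⟨by linarith, by linarith⟩
    · have hwinP : ∀ s, s1 ≤ s → s ≤ s2 →
          (m j : ℝ) * δ ≤ P s j ∧ P s j ≤ ((m j : ℝ) + (w j : ℝ)) * δ := fun s h1 h2 =>
        hw3 j hji _ (hPseg s (by linarith) (by linarith))
      rcases hw1 j with hwone | hwtwo
      · refine ⟨m j, by have := hw2 j; omega, fun h => absurd h hji, fun _ => by omega, ?_⟩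
        intro s h1 h2
        have := hwinP s h1 h2
        rw [hwone] at this
        push_cast at this ⊢
        exact ⟨this.1, by linarith [this.2]⟩
      · by_cases hcase : ((m j : ℝ) + 1) * δ ≤ P s1 j ∧ ((m j : ℝ) + 1) * δ ≤ P s2 j
        · refine ⟨m j + 1, by have := hw2 j; omega, fun h => absurd h hji,
            fun _ => by omega, fun s h1 h2 => ?_⟩
          have hB := hbet j s h1 h2
          have hW := hwinP s h1 h2
          rw [hwtwo] at hW
          push_cast at hW ⊢
          constructor
          · calc ((m j : ℝ) + 1) * δ ≤ min (P s1 j) (P s2 j) := le_min hcase.1 hcase.2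
              _ ≤ P s j := hB.1
          · linarith [hW.2]
        · by_cases hcase2 : P s1 j ≤ ((m j : ℝ) + 1) * δ ∧ P s2 j ≤ ((m j : ℝ) + 1) * δ
          · refine ⟨m j, by have := hw2 j; omega, fun h => absurd h hji,
              fun _ => by omega, fun s h1 h2 => ?_⟩
            have hB := hbet j s h1 h2
            have hW := hwinP s h1 h2
            push_cast at hW ⊢
            refine ⟨hW.1, ?_⟩
            calc P s j ≤ max (P s1 j) (P s2 j) := hB.2
              _ ≤ ((m j : ℝ) + 1) * δ := max_le hcase2.1 hcase2.2
          · exfalso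
            set v : ℝ := ((m j : ℝ) + 1) * δ with hvdef
            have hmix : (P s1 j < v ∧ v < P s2 j) ∨ (P s2 j < v ∧ v < P s1 j) := by
              by_cases h1 : P s1 j < v
              · left
                refine ⟨h1, ?_⟩
                by_contra h2
                exact hcase2 ⟨h1.le, le_of_not_gt h2⟩
              · right
                push_neg at h1
                have hA : P s2 j < v := by
                  by_contra h2
                  exact hcase ⟨h1, le_of_not_gt h2⟩
                exact ⟨hA, lt_of_le_of_ne h1 fun he => hcase2 ⟨he.ge, hA.le⟩⟩
            have hne : P s1 j ≠ P s2 j := by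
              rcases hmix with ⟨a, b⟩ | ⟨a, b⟩ <;> intro he <;> linarith
            have huj : y j - x j ≠ 0 := by
              intro h0
              apply hne
              have h01 := hPdiff j s1 s2
              rw [h0, mul_zero, zero_div] at h01
              linarith
            have hPσ : P (σ j) j = v := by
              rw [hvdef, hPj, hσdef]
              field_simp
              ring
            apply hrgood j hji
            rw [mem_Ioo]
            have hd1 := hPdiff j s1 (σ j)
            have hd2 := hPdiff j (σ j) s2
            rw [hPσ] at hd1 hd2
            rcases hmix with ⟨hm1, hm2⟩ | ⟨hm1, hm2⟩
            · have hujpos : 0 < y j - x j := by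
                rcases lt_or_ge 0 (y j - x j) with h | h
                · exact h
                · exfalso
                  have h3 := hPdiff j s1 s2
                  have h4 : (s2 - s1) * (y j - x j) / (y i - x i) ≤ 0 :=
                    div_nonpos_of_nonpos_of_nonneg (by nlinarith) hui0.le
                  linarith
              have e1 : 0 < (σ j - s1) * (y j - x j) := by
                rcases div_pos_iff.1
                    (show 0 < (σ j - s1) * (y j - x j) / (y i - x i) by linarith) with h | h
                · exact h.1
                · linarith [h.2]
              have e2 : 0 < (s2 - σ j) * (y j - x j) := by
                rcases div_pos_iff.1
                    (show 0 < (s2 - σ j) * (y j - x j) / (y i - x i) by linarith) with h | h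
                · exact h.1
                · linarith [h.2]
              constructor
              · by_contra hcon; push_neg at hcon; nlinarith
              · by_contra hcon; push_neg at hcon; nlinarith
            · have hujneg : y j - x j < 0 := by
                rcases lt_or_ge (y j - x j) 0 with h | h
                · exact h
                · exfalso
                  have h3 := hPdiff j s1 s2
                  have h4 : 0 ≤ (s2 - s1) * (y j - x j) / (y i - x i) :=
                    div_nonneg (by nlinarith) hui0.le
                  linarith
              have e1 : (σ j - s1) * (y j - x j) < 0 := by
                rcases div_neg_iff.1
                    (show (σ j - s1) * (y j - x j) / (y i - x i) < 0 by linarith) with h | h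
                · linarith [h.2]
                · exact h.1
              have e2 : (s2 - σ j) * (y j - x j) < 0 := by
                rcases div_neg_iff.1
                    (show (s2 - σ j) * (y j - x j) / (y i - x i) < 0 by linarith) with h | h
                · linarith [h.2]
                · exact h.1
              constructor
              · by_contra hcon; push_neg at hcon; nlinarith
              · by_contra hcon; push_neg at hcon; nlinarith
  choose c hc1 hci hcw hcP using hcell
  set l : Fin d → Fin (N ^ n) := fun j => ⟨c j, by have := hc1 j; omega⟩ with hldef
  have hlval : ∀ j, ((l j : ℕ) : ℝ) = (c j : ℝ) := fun j => rfl
  have hQP : ∀ s, s1 ≤ s → s ≤ s2 → P s ∈ gridCube d N n l := by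
    intro s h1 h2
    simp only [gridCube, mem_setOf_eq]
    intro j
    have := hcP j s h1 h2
    rw [div_eq_mul_inv, div_eq_mul_inv, hlval]
    push_cast
    exact this
  -- decomposition of the line ℓ
  obtain ⟨x0, v0, hv00, hleq⟩ := hline
  have hxl : x ∈ ℓ := hsub (left_mem_segment ℝ x y)
  have hyl : y ∈ ℓ := hsub (right_mem_segment ℝ x y)
  rw [hleq] at hxl hyl
  obtain ⟨tx, hxe⟩ := hxl
  obtain ⟨ty, hye⟩ := hyl
  have hcoord : ∀ j, y j - x j = (ty - tx) * v0 j := by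
    intro j
    rw [hye, hxe, euc_add_smul_apply, euc_add_smul_apply]
    ring
  have htt : ty - tx ≠ 0 := by
    intro h0
    have h := hcoord i
    rw [h0, zero_mul] at h
    linarith
  refine ⟨l, ?_, ?_, ?_, ?_, ?_⟩
  · -- (0) the cube is contained in the layer
    intro z hz
    simp only [gridCube, mem_setOf_eq] at hz
    have h := hz i
    rw [hlval, hci i rfl] at h
    simp only [nLayer, mem_setOf_eq, mem_Icc]
    exact h
  · -- (i) very proper intersection in direction i
    unfold VeryProperly
    refine ⟨(k : ℤ) * d + ((r : ℕ) : ℤ), ?_⟩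
    intro s hs
    rw [mem_Icc] at hs
    have he1 : (((k : ℤ) * d + ((r:ℕ):ℤ) : ℤ) : ℝ) * ((d:ℝ)⁻¹ * ((N:ℝ) ^ n)⁻¹) = s1 := by
      rw [hs1def, hδdef]
      push_cast
      field_simp
    have he2 : ((((k : ℤ) * d + ((r:ℕ):ℤ) : ℤ) : ℝ) + 1) * ((d:ℝ)⁻¹ * ((N:ℝ) ^ n)⁻¹) = s2 := by
      rw [hs2def, hδdef]
      push_cast
      field_simp
      ring
    rw [he1, he2] at hs
    exact ⟨P s, ⟨hsub (hPseg s (by linarith) (by linarith)), hQP s hs.1 hs.2⟩, hPi s⟩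
  · -- (ii) proper intersection
    unfold Properly
    obtain ⟨i₀, -, hmax⟩ :=
      Finset.exists_max_image Finset.univ (fun j => |y j - x j|) ⟨i, Finset.mem_univ i⟩
    have hmaxi : y i - x i ≤ |y i₀ - x i₀| :=
      le_trans (le_abs_self _) (hmax i (Finset.mem_univ i))
    refine ⟨i₀, ?_, ?_⟩
    · -- principle direction
      intro p hp q hq j
      rw [hleq] at hp hq
      obtain ⟨tp, hpe⟩ := hp
      obtain ⟨tq, hqe⟩ := hq
      have hpq : ∀ j', q j' - p j' = (tq - tp) * v0 j' := by
        intro j'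
        rw [hpe, hqe, euc_add_smul_apply, euc_add_smul_apply]
        ring
      have hv : |v0 j| ≤ |v0 i₀| := by
        have h1 := hmax j (Finset.mem_univ j)
        have h2 : ∀ j', |y j' - x j'| = |ty - tx| * |v0 j'| := fun j' => by
          rw [hcoord j', abs_mul]
        rw [h2 j, h2 i₀] at h1
        exact le_of_mul_le_mul_left h1 (abs_pos.2 htt)
      calc |q j - p j| = |tq - tp| * |v0 j| := by rw [hpq j, abs_mul]
        _ ≤ |tq - tp| * |v0 i₀| := mul_le_mul_of_nonneg_left hv (abs_nonneg _)
        _ = |q i₀ - p i₀| := by rw [hpq i₀, abs_mul]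
    · -- the measure estimate
      unfold ProperlyIn
      set g : ℝ → ℝ := fun s => x i₀ + ((s - x i) / (y i - x i)) * (y i₀ - x i₀) with hgdef
      have hgP : ∀ s, g s = P s i₀ := fun s => (hPj s i₀).symm
      have hgc : ContinuousOn g (uIcc s1 s2) :=
        (continuous_const.add (((continuous_id.sub continuous_const).div_const
          (y i - x i)).mul continuous_const)).continuousOn
      have hIVT := intermediate_value_uIcc hgc
      have himg : g '' uIcc s1 s2 ⊆ proj d i₀ '' (ℓ ∩ gridCube d N n l) := by
        rintro _ ⟨s, hsmem, rfl⟩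
        rw [uIcc_of_le hs12.le, mem_Icc] at hsmem
        exact ⟨P s, ⟨hsub (hPseg s (by linarith) (by linarith)), hQP s hsmem.1 hsmem.2⟩,
          (hgP s).symm⟩
      have hsubE : uIcc (g s1) (g s2) ⊆ proj d i₀ '' (ℓ ∩ gridCube d N n l) :=
        fun z hz => himg (hIVT hz)
      have hmeas : μH[1] (uIcc (g s1) (g s2)) = ENNReal.ofReal |g s2 - g s1| := by
        rw [MeasureTheory.hausdorffMeasure_real, Real.volume_interval]
      have hlen : (d:ℝ)⁻¹ * ((N:ℝ) ^ n)⁻¹ ≤ |g s2 - g s1| := by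
        have hdiffg : g s2 - g s1 = ((s2 - s1) / (y i - x i)) * (y i₀ - x i₀) := by
          rw [hgdef]
          field_simp
          ring
        rw [hdiffg, abs_mul]
        have hfac : (0:ℝ) ≤ (s2 - s1) / (y i - x i) :=
          div_nonneg (by linarith) hui0.le
        rw [abs_of_nonneg hfac]
        have hss : s2 - s1 = δ / d := by rw [hs1def, hs2def]; ring
        have h2 : (s2 - s1) / (y i - x i) * (y i - x i) = s2 - s1 :=
          div_mul_cancel₀ _ hui0.ne'
        calc (d:ℝ)⁻¹ * ((N:ℝ) ^ n)⁻¹ = s2 - s1 := by rw [hss, hδdef]; ring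
          _ = (s2 - s1) / (y i - x i) * (y i - x i) := h2.symm
          _ ≤ (s2 - s1) / (y i - x i) * |y i₀ - x i₀| :=
            mul_le_mul_of_nonneg_left hmaxi hfac
      calc ENNReal.ofReal ((d:ℝ)⁻¹ * ((N:ℝ) ^ n)⁻¹)
          ≤ ENNReal.ofReal |g s2 - g s1| := ENNReal.ofReal_le_ofReal hlen
        _ = μH[1] (uIcc (g s1) (g s2)) := hmeas.symm
        _ ≤ μH[1] (proj d i₀ '' (ℓ ∩ gridCube d N n l)) := measure_mono hsubE
  · -- (iii) the line meets the cube exactly in the segment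
    apply Subset.antisymm
    · rintro z ⟨hzl, hzQ⟩
      refine ⟨?_, hzQ⟩
      rw [hleq] at hzl
      obtain ⟨tz, hze⟩ := hzl
      set τ : ℝ := (tz - tx) / (ty - tx) with hτdef
      have hzc : ∀ j, z j = x j + τ * (y j - x j) := by
        intro j
        rw [hcoord j, hze, hxe, euc_add_smul_apply, euc_add_smul_apply, hτdef]
        field_simp
        ring
      have hzQ' := hzQ
      simp only [gridCube, mem_setOf_eq] at hzQ'
      have h := hzQ' i
      rw [hlval, hci i rfl, div_eq_mul_inv, div_eq_mul_inv, ← hδdef] at h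
      have hτ0' : 0 ≤ τ * (y i - x i) := by
        have hz0 := hzc i
        linarith [h.1, hxi]
      have hτ1' : τ * (y i - x i) ≤ y i - x i := by
        have hz0 := hzc i
        linarith [h.2, hyi]
      have h0 : 0 ≤ τ := by
        by_contra hcon
        push_neg at hcon
        nlinarith
      have h1 : τ ≤ 1 := by
        by_contra hcon
        push_neg at hcon
        nlinarith
      have hzeq : z = x + τ • (y - x) := by
        ext j
        rw [euc_add_smul_apply, PiLp.sub_apply]
        exact hzc j
      rw [hzeq]
      exact mem_seg x y τ h0 h1
    · rintro z ⟨hzs, hzQ⟩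
      exact ⟨hsub hzs, hzQ⟩
  · -- (iv) neighbour of every positively-charged cube in the layer
    intro l' hl'sub hpos
    obtain ⟨z, hz, z', hz', hzz⟩ := exists_two_points hpos
    obtain ⟨hzs, hzQ'⟩ := hz
    obtain ⟨hz's, hz'Q'⟩ := hz'
    obtain ⟨τ1, hτ10, hτ11, hz1c⟩ := seg_coord hzs
    obtain ⟨τ2, hτ20, hτ21, hz2c⟩ := seg_coord hz's
    have hττ : τ1 ≠ τ2 := by
      rintro rfl
      exact hzz (PiLp.ext fun j => by rw [hz1c j, hz2c j])
    simp only [gridCube, mem_setOf_eq] at hzQ' hz'Q'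
    have hadj : ∀ j : Fin d, (c j : ℝ) * δ ≤ ((l' j : ℕ) : ℝ) * δ + δ ∧
        ((l' j : ℕ) : ℝ) * δ ≤ (c j : ℝ) * δ + δ := by
      intro j
      have hzb := hzQ' j
      have hz'b := hz'Q' j
      rw [div_eq_mul_inv, div_eq_mul_inv, ← hδdef] at hzb hz'b
      by_cases hji : j = i
      · subst hji
        have hcorner1 : ptOf d (fun j' => ((l' j' : ℕ) : ℝ) * δ) ∈ gridCube d N n l' := by
          simp only [gridCube, mem_setOf_eq, ptOf, PiLp.toLp_apply]
          intro j'
          rw [div_eq_mul_inv, div_eq_mul_inv, ← hδdef]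
          exact ⟨le_refl _, by nlinarith⟩
        have hcorner2 : ptOf d (fun j' => ((l' j' : ℕ) : ℝ) * δ + δ) ∈ gridCube d N n l' := by
          simp only [gridCube, mem_setOf_eq, ptOf, PiLp.toLp_apply]
          intro j'
          rw [div_eq_mul_inv, div_eq_mul_inv, ← hδdef]
          exact ⟨by nlinarith, by nlinarith⟩
        have hm1 := hl'sub hcorner1
        have hm2 := hl'sub hcorner2
        simp only [nLayer, mem_setOf_eq, mem_Icc, ptOf, PiLp.toLp_apply] at hm1 hm2
        rw [div_eq_mul_inv, div_eq_mul_inv, ← hδdef] at hm1 hm2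
        have hge : (k:ℝ) * δ ≤ ((l' j : ℕ) : ℝ) * δ := hm1.1
        have hle : ((l' j : ℕ) : ℝ) * δ + δ ≤ ((k:ℝ) + 1) * δ := hm2.2
        have hcjk : (c j : ℝ) = (k : ℝ) := by rw [hci j rfl]
        constructor <;> nlinarith
      · have hww := hw3 j hji
        have hwz := hww z hzs
        have hwz' := hww z' hz's
        have hcs := hcP j s1 le_rfl hs12.le
        have hmcw := hcw j hji
        have hwj2 : (w j : ℝ) ≤ 2 := by rcases hw1 j with h | h <;> rw [h] <;> norm_num
        have hmr : (m j : ℝ) ≤ (c j : ℝ) := by exact_mod_cast hmcw.1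
        have hcwr : (c j : ℝ) + 1 ≤ (m j : ℝ) + (w j : ℝ) := by
          have := hmcw.2
          push_cast
          exact_mod_cast this
        constructor
        · by_contra hcon
          push_neg at hcon
          have hr1 : ((l' j : ℕ) : ℝ) + 1 < (c j : ℝ) := by nlinarith
          have hn1 : (l' j : ℕ) + 1 < c j := by exact_mod_cast hr1
          have hint : ((l' j : ℕ) : ℝ) + 2 ≤ (c j : ℝ) := by
            exact_mod_cast (by omega : (l' j : ℕ) + 2 ≤ c j)
          have hl'm : ((l' j : ℕ) : ℝ) + 1 ≤ (m j : ℝ) := by linarith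
          have hzj : z j = (m j : ℝ) * δ :=
            le_antisymm (by nlinarith [hzb.2]) hwz.1
          have hz'j : z' j = (m j : ℝ) * δ :=
            le_antisymm (by nlinarith [hz'b.2]) hwz'.1
          have hujz : y j - x j = 0 := by
            have h5 : z j - z' j = (τ1 - τ2) * (y j - x j) := by
              rw [hz1c j, hz2c j]; ring
            rw [hzj, hz'j, sub_self] at h5
            rcases mul_eq_zero.1 h5.symm with h | h
            · exact absurd (sub_eq_zero.1 h) hττ
            · exact h
          have hPs1 : P s1 j = x j := by rw [hPj, hujz, mul_zero, add_zero]
          have hxjz : x j = z j := by rw [hz1c j, hujz, mul_zero, add_zero]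
          nlinarith [hcs.1]
        · by_contra hcon
          push_neg at hcon
          have hr1 : (c j : ℝ) + 1 < ((l' j : ℕ) : ℝ) := by nlinarith
          have hn1 : c j + 1 < (l' j : ℕ) := by exact_mod_cast hr1
          have hint : (c j : ℝ) + 2 ≤ ((l' j : ℕ) : ℝ) := by
            exact_mod_cast (by omega : c j + 2 ≤ (l' j : ℕ))
          have hl'mw : (m j : ℝ) + (w j : ℝ) ≤ ((l' j : ℕ) : ℝ) := by linarith
          have hzj : z j = ((m j : ℝ) + (w j : ℝ)) * δ :=
            le_antisymm hwz.2 (by nlinarith [hzb.1])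
          have hz'j : z' j = ((m j : ℝ) + (w j : ℝ)) * δ :=
            le_antisymm hwz'.2 (by nlinarith [hz'b.1])
          have hujz : y j - x j = 0 := by
            have h5 : z j - z' j = (τ1 - τ2) * (y j - x j) := by
              rw [hz1c j, hz2c j]; ring
            rw [hzj, hz'j, sub_self] at h5
            rcases mul_eq_zero.1 h5.symm with h | h
            · exact absurd (sub_eq_zero.1 h) hττ
            · exact h
          have hPs1 : P s1 j = x j := by rw [hPj, hujz, mul_zero, add_zero]
          have hxjz : x j = z j := by rw [hz1c j, hujz, mul_zero, add_zero]
          -- l' ≤ m + w from z j between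
          have hl'ub : ((l' j : ℕ) : ℝ) ≤ (m j : ℝ) + (w j : ℝ) := by nlinarith [hzb.1, hwz.2]
          nlinarith [hcs.2]
    refine ⟨ptOf d (fun j => max ((c j : ℝ) * δ) (((l' j : ℕ) : ℝ) * δ)), ?_, ?_⟩
    · simp only [gridCube, mem_setOf_eq, ptOf, PiLp.toLp_apply]
      intro j
      rw [hlval, div_eq_mul_inv, div_eq_mul_inv, ← hδdef]
      refine ⟨le_max_left _ _, max_le (by nlinarith) ?_⟩
      have := (hadj j).2
      nlinarith
    · simp only [gridCube, mem_setOf_eq, ptOf, PiLp.toLp_apply]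
      intro j
      rw [div_eq_mul_inv, div_eq_mul_inv, ← hδdef]
      refine ⟨le_max_right _ _, max_le ?_ (by nlinarith)⟩
      have := (hadj j).1
      nlinarith

end ProofAux

/-- (Observation on proper intersections.) -/
theorem proper_intersection_observation
    (d N : ℕ) (hd : 2 ≤ d) (hN : 2 ≤ N) (n : ℕ) (i : Fin d) (k : ℕ) (hk : k < N ^ n)
    (x y : Euc d)
    (ha : SegPassesThrough d x y (nLayer d N n i k))
    (hb : ∀ j : Fin d, j ≠ i → ∃ k1 k2 : ℕ, k1 < N ^ n ∧ k2 < N ^ n ∧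
      segment ℝ x y ⊆ nLayer d N n j k1 ∪ nLayer d N n j k2)
    (ℓ : Set (Euc d)) (hline : IsLine d ℓ) (hsub : segment ℝ x y ⊆ ℓ) :
    ∃ l : Fin d → Fin (N ^ n),
      gridCube d N n l ⊆ nLayer d N n i k ∧
      VeryProperly d N i ℓ (gridCube d N n l) n ∧
      Properly d N ℓ (gridCube d N n l) n ∧
      ℓ ∩ gridCube d N n l = segment ℝ x y ∩ gridCube d N n l ∧
      ∀ l' : Fin d → Fin (N ^ n), gridCube d N n l' ⊆ nLayer d N n i k →
        0 < μH[1] (segment ℝ x y ∩ gridCube d N n l') →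
        (gridCube d N n l ∩ gridCube d N n l').Nonempty := by
  have hNR : (0:ℝ) < (N:ℝ) ^ n := by
    have : (0:ℝ) < (N:ℝ) := by exact_mod_cast (by omega : 0 < N)
    positivity
  obtain ⟨hxc, hyc, hne⟩ := ha
  -- the interior of the layer is contained in the open slab
  have hint : interior (nLayer d N n i k) ⊆
      {z : Euc d | (k:ℝ) / (N:ℝ) ^ n < z i ∧ z i < ((k:ℝ) + 1) / (N:ℝ) ^ n} := by
    intro z hz
    obtain ⟨ε, hε, hball⟩ := Metric.isOpen_iff.1 isOpen_interior z hz
    have hsubL : Metric.ball z ε ⊆ nLayer d N n i k := hball.trans interior_subset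
    have hmem1 : z - (ε / 2) • (EuclideanSpace.single i (1:ℝ)) ∈ Metric.ball z ε := by
      rw [Metric.mem_ball, dist_eq_norm, sub_sub_cancel_left, norm_neg, norm_smul,
        EuclideanSpace.norm_single, norm_one, mul_one, Real.norm_eq_abs,
        abs_of_pos (by linarith)]
      linarith
    have hmem2 : z + (ε / 2) • (EuclideanSpace.single i (1:ℝ)) ∈ Metric.ball z ε := by
      rw [Metric.mem_ball, dist_eq_norm, add_sub_cancel_left, norm_smul,
        EuclideanSpace.norm_single, norm_one, mul_one, Real.norm_eq_abs,
        abs_of_pos (by linarith)]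
      linarith
    have h1 := hsubL hmem1
    have h2 := hsubL hmem2
    simp only [nLayer, mem_setOf_eq, mem_Icc] at h1 h2
    have e1 : (z - (ε / 2) • (EuclideanSpace.single i (1:ℝ))) i = z i - ε / 2 := by
      simp [PiLp.sub_apply, PiLp.smul_apply, EuclideanSpace.single_apply, smul_eq_mul]
    have e2 : (z + (ε / 2) • (EuclideanSpace.single i (1:ℝ))) i = z i + ε / 2 := by
      simp [PiLp.add_apply, PiLp.smul_apply, EuclideanSpace.single_apply, smul_eq_mul]
    rw [e1] at h1
    rw [e2] at h2
    exact ⟨by linarith [h1.1], by linarith [h2.2]⟩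
  -- convex sets avoiding the open slab cannot contain both x and y
  have hcc : ∀ C : Set (Euc d), Convex ℝ C →
      (∀ z ∈ C, ¬((k:ℝ) / (N:ℝ) ^ n < z i ∧ z i < ((k:ℝ) + 1) / (N:ℝ) ^ n)) →
      x ∈ C → y ∈ C → False := by
    intro C hconv hCsub hxC hyC
    have hCcompl : C ⊆ (interior (nLayer d N n i k))ᶜ :=
      fun z hz hzint => hCsub z hz (hint hzint)
    have hsub2 : C ⊆ connectedComponentIn (interior (nLayer d N n i k))ᶜ x :=
      hconv.isPreconnected.subset_connectedComponentIn hxC hCcompl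
    exact hne (connectedComponentIn_eq (hsub2 hyC))
  have hlin : IsLinearMap ℝ (fun z : Euc d => z i) :=
    ⟨fun p q => by simp [PiLp.add_apply], fun r p => by simp [PiLp.smul_apply]⟩
  have hcleft : Convex ℝ {z : Euc d | z i ≤ (k:ℝ) / (N:ℝ) ^ n} :=
    convex_halfSpace_le hlin _
  have hcright : Convex ℝ {z : Euc d | ((k:ℝ) + 1) / (N:ℝ) ^ n ≤ z i} :=
    convex_halfSpace_ge hlin _
  -- each endpoint is on one side of the layer
  have hside : ∀ p : Euc d, p ∈ (interior (nLayer d N n i k))ᶜ →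
      p i ≤ (k:ℝ) / (N:ℝ) ^ n ∨ ((k:ℝ) + 1) / (N:ℝ) ^ n ≤ p i := by
    intro p hp
    by_contra h
    push_neg at h
    apply hp
    have hopen : IsOpen {z : Euc d |
        (k:ℝ) / (N:ℝ) ^ n < z i ∧ z i < ((k:ℝ) + 1) / (N:ℝ) ^ n} := by
      have heq : {z : Euc d | (k:ℝ) / (N:ℝ) ^ n < z i ∧ z i < ((k:ℝ) + 1) / (N:ℝ) ^ n} =
          (fun z : Euc d => z i) ⁻¹' (Ioo ((k:ℝ) / (N:ℝ) ^ n) (((k:ℝ) + 1) / (N:ℝ) ^ n)) :=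
        rfl
      rw [heq]
      exact isOpen_Ioo.preimage (PiLp.continuous_apply (p := 2) (β := fun _ : Fin d => ℝ) i)
    have hUL : {z : Euc d | (k:ℝ) / (N:ℝ) ^ n < z i ∧ z i < ((k:ℝ) + 1) / (N:ℝ) ^ n} ⊆
        nLayer d N n i k := fun z hz => ⟨hz.1.le, hz.2.le⟩
    exact interior_maximal hUL hopen ⟨h.1, h.2⟩
  rcases hside x hxc with hxL | hxR <;> rcases hside y hyc with hyL | hyR
  · exact absurd (hcc _ hcleft (fun z hz hs => absurd hs.1 (not_lt.2 hz)) hxL hyL) not_false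
  · exact key d N hd hN n i k hk x y (by rw [← div_eq_mul_inv]; exact hxL)
      (by rw [← div_eq_mul_inv]; exact hyR) hb ℓ hline hsub
  · have hb' : ∀ j : Fin d, j ≠ i → ∃ k1 k2 : ℕ, k1 < N ^ n ∧ k2 < N ^ n ∧
        segment ℝ y x ⊆ nLayer d N n j k1 ∪ nLayer d N n j k2 := by
      intro j hj
      obtain ⟨k1, k2, h1, h2, h3⟩ := hb j hj
      exact ⟨k1, k2, h1, h2, by rw [segment_symm]; exact h3⟩
    have hsub' : segment ℝ y x ⊆ ℓ := by rw [segment_symm]; exact hsub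
    have hres := key d N hd hN n i k hk y x (by rw [← div_eq_mul_inv]; exact hyL)
      (by rw [← div_eq_mul_inv]; exact hxR) hb' ℓ hline hsub'
    rw [segment_symm ℝ y x] at hres
    exact hres
  · exact absurd (hcc _ hcright (fun z hz hs => absurd hs.2 (not_lt.2 hz)) hxR hyR) not_false
end
end

section
/- Let x = (1, x_2, …, x_d) and w = (0, 1, w_3, …, w_d) be points in ℝ^d with 0 ≤ x_j ≤ 1 for all j = 2,…,d and 0 ≤ w_j ≤ 1 for all j = 3,…,d. Let ℓ be the line through the origin spanned by x. Then dist(w, ℓ) ≥ 1/√2. -/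
open MeasureTheory Set
open scoped ENNReal NNReal

noncomputable section

open FracPerc

/-- Minimum distance of `w = (0,1,w₃,…,w_d)` to the line spanned by
`x = (1,x₂,…,x_d)`. -/
theorem min_distance_to_spanned_line
    (d : ℕ) (hd : 2 ≤ d) (x w : Euc d)
    (hx0 : x ⟨0, by omega⟩ = 1)
    (hx : ∀ j : Fin d, j ≠ ⟨0, by omega⟩ → x j ∈ Icc (0 : ℝ) 1)
    (hw0 : w ⟨0, by omega⟩ = 0) (hw1 : w ⟨1, by omega⟩ = 1)
    (hw : ∀ j : Fin d, j ≠ ⟨0, by omega⟩ → j ≠ ⟨1, by omega⟩ → w j ∈ Icc (0 : ℝ) 1) :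
    1 / Real.sqrt 2 ≤ Metric.infDist w {y : Euc d | ∃ t : ℝ, y = t • x} := by
  set i0 : Fin d := ⟨0, by omega⟩
  set i1 : Fin d := ⟨1, by omega⟩
  have hne : i0 ≠ i1 := by simp [i0, i1, Fin.ext_iff]
  have hS : {y : Euc d | ∃ t : ℝ, y = t • x}.Nonempty := ⟨0, 0, by simp⟩
  refine le_of_not_gt fun hlt => ?_
  obtain ⟨y, ⟨t, rfl⟩, hy⟩ := (Metric.infDist_lt_iff hS).1 hlt
  refine hy.not_ge ?_
  have ha := hx i1 hne.symm
  have key : (2:ℝ)⁻¹ ≤ (w i0 - (t • x) i0)^2 + (w i1 - (t • x) i1)^2 := by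
    have hx1 : (t • x) i0 = t := by simp [PiLp.smul_apply, hx0]
    have hx2 : (t • x) i1 = t * x i1 := by simp [PiLp.smul_apply]
    rw [hx1, hx2, hw0, hw1]
    obtain ⟨ha0, ha1⟩ := ha
    rcases le_or_gt 0 t with ht | ht
    · nlinarith [sq_nonneg (t - (1 - t * x i1)), mul_nonneg ht (sub_nonneg.2 ha1),
        sq_nonneg (t * (1 - x i1))]
    · have h2 : t * x i1 ≤ 0 := mul_nonpos_of_nonpos_of_nonneg ht.le ha0
      nlinarith [sq_nonneg t]
  have hsum : (2:ℝ)⁻¹ ≤ ∑ i, (w i - (t • x) i)^2 := by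
    refine key.trans ?_
    have : (w i0 - (t • x) i0)^2 + (w i1 - (t • x) i1)^2
        = ∑ i ∈ ({i0, i1} : Finset (Fin d)), (w i - (t • x) i)^2 := by
      rw [Finset.sum_pair hne]
    rw [this]
    exact Finset.sum_le_sum_of_subset_of_nonneg (Finset.subset_univ _)
      (fun i _ _ => sq_nonneg _)
  have hd2 : dist w (t • x) = Real.sqrt (∑ i, (w i - (t • x) i)^2) := by
    rw [EuclideanSpace.dist_eq]
    congr 1
    exact Finset.sum_congr rfl fun i _ => by rw [Real.dist_eq, sq_abs]
  rw [hd2, one_div, ← Real.sqrt_inv]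
  exact Real.sqrt_le_sqrt hsum
end
end

section
/- If j ∈ {1,…,d} is a principle direction of a line ℓ ⊂ ℝ^d, then for every w ∈ ℝ^d one has d_∞(w, ℓ ∩ Π_j^{−1}(Π_j(w))) ≤ √2 · dist(w, ℓ). -/
open MeasureTheory Set
open scoped ENNReal NNReal

noncomputable section

open FracPerc

/-- If `j` is a principle direction of a line `ℓ` then
`d_∞(w, ℓ ∩ Π_j⁻¹(Π_j(w))) ≤ √2 · dist(w, ℓ)` for every `w`. -/
theorem dmax_le_sqrt_two_mul_dist
    (d : ℕ) (hd : 2 ≤ d) (ℓ : Set (Euc d)) (hline : IsLine d ℓ)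
    (j : Fin d) (hpd : PrincipleDir d j ℓ) (w : Euc d) :
    dmaxSet d w (ℓ ∩ {y : Euc d | y j = w j}) ≤ Real.sqrt 2 * Metric.infDist w ℓ := by
  have hdpos : 0 < d := by omega
  haveI : Nonempty (Fin d) := Fin.pos_iff_nonempty.mp hdpos
  obtain ⟨x, v, hv, rfl⟩ := hline
  have hmem : ∀ t : ℝ, x + t • v ∈ lineThrough d x v := fun t => ⟨t, rfl⟩
  have happ : ∀ (t : ℝ) (i : Fin d), (x + t • v) i = x i + t * v i := by
    intro t i; rfl
  have hvj : v j ≠ 0 := by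
    intro h0
    apply hv
    ext i
    have hx : x ∈ lineThrough d x v := ⟨0, by simp⟩
    have h := hpd x hx (x + (1:ℝ) • v) (hmem 1) i
    simp only [happ, h0] at h
    have : |v i| ≤ 0 := by simpa using h
    have := abs_nonneg (v i)
    have : |v i| = 0 := le_antisymm ‹|v i| ≤ 0› this
    simpa using abs_eq_zero.mp this
  set t0 : ℝ := (w j - x j) / v j with ht0
  set p : Euc d := x + t0 • v with hp
  have hpl : p ∈ lineThrough d x v := hmem t0
  have hpj : p j = w j := by
    have := happ t0 j
    rw [hp, this, ht0]
    field_simp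
    ring
  have hpset : p ∈ lineThrough d x v ∩ {y : Euc d | y j = w j} := ⟨hpl, hpj⟩
  -- key pointwise bound
  have key : ∀ q ∈ lineThrough d x v, ∀ i : Fin d,
      |w i - p i| ≤ Real.sqrt 2 * dist w q := by
    intro q hq i
    by_cases hij : i = j
    · subst hij
      rw [hpj, sub_self, abs_zero]
      positivity
    · have h1 : |q i - p i| ≤ |q j - p j| := hpd p hpl q hq i
      have h2 : |w i - p i| ≤ |w i - q i| + |w j - q j| := by
        have : |q j - p j| = |w j - q j| := by rw [hpj, abs_sub_comm]
        calc |w i - p i| ≤ |w i - q i| + |q i - p i| := by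
              have := abs_sub_le (w i) (q i) (p i); linarith
          _ ≤ |w i - q i| + |w j - q j| := by rw [← this]; linarith
      set a := |w i - q i| with ha
      set b := |w j - q j| with hb
      have hdist : dist w q ^ 2 = ∑ k, |w k - q k| ^ 2 := by
        rw [EuclideanSpace.dist_eq]
        rw [Real.sq_sqrt (by positivity)]
        simp [Real.dist_eq]
      have hsum : a ^ 2 + b ^ 2 ≤ dist w q ^ 2 := by
        rw [hdist]
        have := Finset.sum_le_sum_of_subset_of_nonneg
          (Finset.subset_univ ({i, j} : Finset (Fin d)))
          (fun k _ _ => by positivity : ∀ k ∈ Finset.univ, k ∉ ({i,j} : Finset (Fin d)) → (0:ℝ) ≤ |w k - q k| ^ 2)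
        rwa [Finset.sum_pair hij] at this
      have hab : 0 ≤ a + b := by positivity
      have hdn : (0:ℝ) ≤ dist w q := dist_nonneg
      have hs2 : Real.sqrt 2 ^ 2 = 2 := Real.sq_sqrt (by norm_num)
      have hs2n : (0:ℝ) ≤ Real.sqrt 2 := Real.sqrt_nonneg 2
      have h4 : (a + b) ^ 2 ≤ 2 * dist w q ^ 2 := by nlinarith [sq_nonneg (a - b)]
      have h5 : a + b ≤ Real.sqrt 2 * dist w q := by
        have := Real.sqrt_le_sqrt h4
        rwa [Real.sqrt_sq hab, Real.sqrt_mul (by norm_num : (0:ℝ) ≤ 2), Real.sqrt_sq hdn] at this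
      linarith
  have hne : (lineThrough d x v).Nonempty := ⟨p, hpl⟩
  have hdmax : dmax d w p ≤ Real.sqrt 2 * Metric.infDist w (lineThrough d x v) := by
    have hs2pos : (0:ℝ) < Real.sqrt 2 := Real.sqrt_pos.mpr (by norm_num)
    rw [← div_le_iff₀' hs2pos]
    rw [Metric.infDist_eq_iInf]
    haveI : Nonempty ↥(lineThrough d x v) := hne.to_subtype
    refine le_ciInf fun q => ?_
    rw [div_le_iff₀' hs2pos]
    exact ciSup_le (key q q.2)
  refine le_trans ?_ hdmax
  apply csInf_le
  · refine ⟨0, fun r hr => ?_⟩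
    obtain ⟨y, _, rfl⟩ := hr
    exact Real.iSup_nonneg fun i => abs_nonneg _
  · exact ⟨p, hpset, rfl⟩
end
end

section
/- Let (F_n)_{n∈ℕ} be a sequence of independent sub-σ-algebras of ℬ on Ω. For each n ∈ ℕ let A_n : Ω × 𝒬_n → {0,1} be such that A_n(·,Q) is F_n-measurable for every Q ∈ 𝒬_n. Let 0 ≤ ρ ≤ 1 and assume ℙ_p({ω : A_n(ω,Q) = 1}) ≤ ρ for all n and all Q ∈ 𝒬_n. Let M_1 ∈ ℕ and let ≃ be a reflexive relation on ⋃_n 𝒬_n such that every Q ∈ 𝒬_n has at most M_1 cubes Q' ∈ 𝒬_n with Q' ≃ Q, and Q' ≄ Q whenever Q' ∈ 𝒬_m with m ≠ n. For ω ∈ Ω say Q ∈ 𝒬_n is selected if A_n(ω,Q') = 1 for some Q' ≃ Q, and set Ẽ_n(ω) := ⋃{Q ∈ 𝒬_n : Q selected} and Ẽ^k(ω) := ⋂_{n≥k} Ẽ_n(ω). Then, with s := log(max{M_1 ρ N^d, 1}) / log N (so s → 0 as ρ → 0), for every k ∈ ℕ one has dim_H Ẽ^k(ω) ≤ s for ℙ_p-almost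 every ω ∈ Ω. -/
open MeasureTheory Set
open scoped ENNReal NNReal

noncomputable section

open FracPerc

namespace P11

open Finset

/-- Class index: a common denominator exponent `t` together with,
for each coordinate, either `some a` (the coordinate equals `a/N^t`)
or `none` (the coordinate is not `N`-adic). -/
abbrev CIdx (d : ℕ) := ℕ × (Fin d → Option ℕ)

variable (d N : ℕ)

/-- The set of points of `ℝ^d` of class `c`. -/
def classSet (c : CIdx d) : Set (Euc d) :=
  {x | ∀ i : Fin d, (c.2 i).elim (∀ b t : ℕ, x i ≠ (b : ℝ) / (N : ℝ) ^ t)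
      (fun a => x i = (a : ℝ) / (N : ℝ) ^ c.1)}

/-- The number of `N`-adic (fixed) coordinates of a class. -/
def ec (c : CIdx d) : ℕ := (Finset.univ.filter fun i : Fin d => (c.2 i).isSome).card

/-- Coordinate condition defining the candidate cubes at level `m`, with base
level `Mt` and base position value `li` at coordinate `i`. -/
def coordCond (c : CIdx d) (Mt m : ℕ) (li : ℕ) (i : Fin d) (v : ℕ) : Prop :=
  (c.2 i).elim (v = li / N ^ (Mt - m))
    (fun a => v + 1 = a * N ^ (m - c.1) ∨ v = a * N ^ (m - c.1))

def cond (c : CIdx d) (Mt m : ℕ) (l : Fin d → Fin (N ^ Mt)) (v : Fin d → Fin (N ^ m)) : Prop :=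
  ∀ i, coordCond d N c Mt m (l i) i (v i)

open scoped Classical in
/-- The candidate positions at level `m` associated with a base position `l` at level `Mt`. -/
noncomputable def candF (c : CIdx d) (Mt m : ℕ) (l : Fin d → Fin (N ^ Mt)) :
    Finset (Fin d → Fin (N ^ m)) :=
  Finset.univ.filter (cond d N c Mt m l)

variable (A : (n : ℕ) → Omega d N → (Fin d → Fin (N ^ n)) → Bool)
variable (r : (n : ℕ) → (Fin d → Fin (N ^ n)) → (Fin d → Fin (N ^ n)) → Prop)

/-- The event that position `v` at level `m` is selected. -/
def selEv (m : ℕ) (v : Fin d → Fin (N ^ m)) : Set (Omega d N) :=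
  {ω | ∃ l', r m l' v ∧ A m ω l' = true}

/-- The event that some candidate at level `m` is selected. -/
def levelEv (c : CIdx d) (Mt m : ℕ) (l : Fin d → Fin (N ^ Mt)) : Set (Omega d N) :=
  ⋃ v ∈ candF d N c Mt m l, selEv d N A r m v

/-- The event that at every level `m ∈ [n₀, Mt]` some candidate is selected. -/
def goodEv (c : CIdx d) (n₀ Mt : ℕ) (l : Fin d → Fin (N ^ Mt)) : Set (Omega d N) :=
  ⋂ m ∈ Finset.Icc n₀ Mt, levelEv d N A r c Mt m l

open scoped Classical in
/-- Base positions at level `Mt` compatible with class `c`. -/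
noncomputable def Fgood (c : CIdx d) (Mt : ℕ) : Finset (Fin d → Fin (N ^ Mt)) :=
  Finset.univ.filter (fun l => cond d N c Mt Mt l l)

open scoped Classical in
noncomputable def counted (c : CIdx d) (n₀ Mt : ℕ) (ω : Omega d N) :
    Finset (Fin d → Fin (N ^ Mt)) :=
  (Fgood d N c Mt).filter (fun l => ω ∈ goodEv d N A r c n₀ Mt l)

variable (P : Measure (Omega d N))

/-- A measurable pointwise upper bound for the number of counted cubes. -/
noncomputable def XBar (c : CIdx d) (n₀ Mt : ℕ) (ω : Omega d N) : ℝ≥0∞ :=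
  ∑ l ∈ Fgood d N c Mt,
    (toMeasurable P (goodEv d N A r c n₀ Mt l)).indicator (fun _ => (1 : ℝ≥0∞)) ω

/-- The (bar) bound for the `s'`-dimensional sum over counted cubes at step `n`. -/
noncomputable def termB (c : CIdx d) (n₀ : ℕ) (s' : ℝ) (n : ℕ) (ω : Omega d N) : ℝ≥0∞ :=
  XBar d N A r P c n₀ (n₀ + n) ω *
    ENNReal.ofReal ((d : ℝ) * (((N : ℝ) ^ (n₀ + n))⁻¹)) ^ s'

/-- The random set whose dimension we bound. -/
def Tset (k : ℕ) (ω : Omega d N) : Set (Euc d) :=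
  ⋂ n ∈ {m : ℕ | k ≤ m}, ⋃ l : Fin d → Fin (N ^ n),
    ⋃ _ : ∃ l', r n l' l ∧ A n ω l' = true, gridCube d N n l

variable {d N}

/-! ### Counting lemmas -/

lemma card_candF_le (c : CIdx d) (Mt m : ℕ) (l : Fin d → Fin (N ^ Mt)) :
    (candF d N c Mt m l).card ≤ 2 ^ ec d c := by
  classical
  have hsub2 : candF d N c Mt m l ⊆
      Fintype.piFinset (fun i => Finset.univ.filter fun v : Fin (N ^ m) =>
        coordCond d N c Mt m (l i) i (v : ℕ)) := by
    intro v hv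
    rw [Fintype.mem_piFinset]
    intro i
    simp only [candF, Finset.mem_filter, Finset.mem_univ, true_and] at hv
    simp only [Finset.mem_filter, Finset.mem_univ, true_and]
    exact hv i
  refine (Finset.card_le_card hsub2).trans ?_
  rw [Fintype.card_piFinset]
  refine le_trans (Finset.prod_le_prod' (g := fun i => if (c.2 i).isSome then 2 else 1) ?_) ?_
  · intro i _
    by_cases h : (c.2 i).isSome
    · obtain ⟨a, ha⟩ := Option.isSome_iff_exists.mp h
      simp only [h, if_true]
      refine le_trans (Finset.card_le_card_of_injOn (fun v => (v : ℕ))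
        (t := ({a * N ^ (m - c.1) - 1, a * N ^ (m - c.1)} : Finset ℕ)) ?_ ?_) ?_
      · intro v hv
        simp only [Finset.mem_coe, Finset.mem_filter, Finset.mem_univ, true_and, coordCond, ha,
          Option.elim] at hv
        simp only [Finset.mem_coe, Finset.mem_insert, Finset.mem_singleton]
        omega
      · exact fun v _ w _ hvw => Fin.val_injective hvw
      · exact le_trans (Finset.card_insert_le _ _) (by simp)
    · simp only [h, if_false]
      have hn : c.2 i = none := Option.not_isSome_iff_eq_none.mp h
      refine Finset.card_le_one.mpr ?_
      intro u hu w hw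
      simp only [Finset.mem_filter, Finset.mem_univ, true_and, coordCond, hn,
        Option.elim] at hu hw
      exact Fin.val_injective (hu.trans hw.symm)
  · rw [Finset.prod_ite, Finset.prod_const, Finset.prod_const_one, mul_one]
    exact le_of_eq rfl

lemma card_Fgood_le (c : CIdx d) (Mt : ℕ) :
    (Fgood d N c Mt).card ≤ 2 ^ ec d c * (N ^ Mt) ^ (d - ec d c) := by
  classical
  have hsub2 : Fgood d N c Mt ⊆
      Fintype.piFinset (fun i => Finset.univ.filter fun w : Fin (N ^ Mt) =>
        coordCond d N c Mt Mt (w : ℕ) i (w : ℕ)) := by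
    intro v hv
    rw [Fintype.mem_piFinset]
    intro i
    simp only [Fgood, Finset.mem_filter, Finset.mem_univ, true_and] at hv
    simp only [Finset.mem_filter, Finset.mem_univ, true_and]
    exact hv i
  refine (Finset.card_le_card hsub2).trans ?_
  rw [Fintype.card_piFinset]
  refine le_trans
    (Finset.prod_le_prod' (g := fun i => if (c.2 i).isSome then 2 else N ^ Mt) ?_) ?_
  · intro i _
    by_cases h : (c.2 i).isSome
    · obtain ⟨a, ha⟩ := Option.isSome_iff_exists.mp h
      simp only [h, if_true]
      refine le_trans (Finset.card_le_card_of_injOn (fun v => (v : ℕ))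
        (t := ({a * N ^ (Mt - c.1) - 1, a * N ^ (Mt - c.1)} : Finset ℕ)) ?_ ?_) ?_
      · intro v hv
        simp only [Finset.mem_coe, Finset.mem_filter, Finset.mem_univ, true_and, coordCond, ha,
          Option.elim] at hv
        simp only [Finset.mem_coe, Finset.mem_insert, Finset.mem_singleton]
        omega
      · exact fun v _ w _ hvw => Fin.val_injective hvw
      · exact le_trans (Finset.card_insert_le _ _) (by simp)
    · simp only [h, if_false]
      exact le_trans (Finset.card_filter_le _ _) (by simp)
  · rw [Finset.prod_ite, Finset.prod_const, Finset.prod_const, ec]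
    have hcc : (Finset.univ.filter fun i : Fin d => ¬ (c.2 i).isSome).card
        = d - (Finset.univ.filter fun i : Fin d => (c.2 i).isSome).card := by
      have := Finset.card_filter_add_card_filter_not
        (s := (Finset.univ : Finset (Fin d))) (p := fun i => (c.2 i).isSome)
      simp only [Finset.card_univ, Fintype.card_fin] at this
      omega
    rw [hcc]

/-! ### Probability estimates -/

lemma meas_selEv_le (M1 : ℕ) (ρ : ℝ)
    (hA : ∀ (n : ℕ) (l : Fin d → Fin (N ^ n)), P {ω | A n ω l = true} ≤ ENNReal.ofReal ρ)
    (hcard : ∀ (n : ℕ) (l : Fin d → Fin (N ^ n)), ({l' | r n l' l}).ncard ≤ M1)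
    (m : ℕ) (v : Fin d → Fin (N ^ m)) :
    P (selEv d N A r m v) ≤ (M1 : ℝ≥0∞) * ENNReal.ofReal ρ := by
  classical
  have hsub2 : selEv d N A r m v ⊆
      ⋃ l' ∈ Finset.univ.filter (fun l' => r m l' v), {ω | A m ω l' = true} := by
    rintro ω ⟨l', h1, h2⟩
    exact Set.mem_iUnion₂.mpr ⟨l', Finset.mem_filter.mpr ⟨Finset.mem_univ _, h1⟩, h2⟩
  refine (measure_mono hsub2).trans ((measure_biUnion_finset_le _ _).trans ?_)
  refine le_trans (Finset.sum_le_card_nsmul _ _ (ENNReal.ofReal ρ) fun l' _ => hA m l') ?_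
  rw [nsmul_eq_mul]
  have hc : (Finset.univ.filter (fun l' => r m l' v)).card ≤ M1 := by
    have h := hcard m v
    have he : ({l' | r m l' v} : Set _) = ↑(Finset.univ.filter (fun l' => r m l' v)) := by
      ext l'; simp
    rwa [he, Set.ncard_coe_finset] at h
  exact mul_le_mul_left (by exact_mod_cast hc) _

lemma measurable_levelEv (F : ℕ → MeasurableSpace (Omega d N))
    (hmeas : ∀ (n : ℕ) (l : Fin d → Fin (N ^ n)), Measurable[F n] fun ω => A n ω l)
    (c : CIdx d) (Mt m : ℕ) (l : Fin d → Fin (N ^ Mt)) :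
    MeasurableSet[F m] (levelEv d N A r c Mt m l) := by
  refine Finset.measurableSet_biUnion _ fun v _ => ?_
  have hrw : selEv d N A r m v
      = ⋃ l', ⋃ _ : r m l' v, (fun ω => A m ω l') ⁻¹' {true} := by
    ext ω; simp [selEv]
  rw [hrw]
  exact MeasurableSet.iUnion fun l' => MeasurableSet.iUnion fun _ =>
    hmeas m l' (measurableSet_singleton true)

lemma meas_levelEv_le [IsProbabilityMeasure P] (M1 : ℕ) (ρ : ℝ) (hρ0 : 0 ≤ ρ)
    (hA : ∀ (n : ℕ) (l : Fin d → Fin (N ^ n)), P {ω | A n ω l = true} ≤ ENNReal.ofReal ρ)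
    (hcard : ∀ (n : ℕ) (l : Fin d → Fin (N ^ n)), ({l' | r n l' l}).ncard ≤ M1)
    (c : CIdx d) (Mt m : ℕ) (l : Fin d → Fin (N ^ Mt)) :
    P (levelEv d N A r c Mt m l) ≤
      min 1 (ENNReal.ofReal ((2 : ℝ) ^ ec d c * ((M1 : ℝ) * ρ))) := by
  refine le_min prob_le_one ?_
  refine (measure_biUnion_finset_le _ _).trans ?_
  refine le_trans (Finset.sum_le_card_nsmul _ _ ((M1 : ℝ≥0∞) * ENNReal.ofReal ρ)
    fun v _ => meas_selEv_le A r P M1 ρ hA hcard m v) ?_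
  rw [nsmul_eq_mul]
  calc ((candF d N c Mt m l).card : ℝ≥0∞) * ((M1 : ℝ≥0∞) * ENNReal.ofReal ρ)
      ≤ ((2 ^ ec d c : ℕ) : ℝ≥0∞) * ((M1 : ℝ≥0∞) * ENNReal.ofReal ρ) :=
        mul_le_mul_left (by exact_mod_cast card_candF_le c Mt m l) _
    _ = ENNReal.ofReal ((2 : ℝ) ^ ec d c * ((M1 : ℝ) * ρ)) := by
        rw [ENNReal.ofReal_mul (by positivity), ENNReal.ofReal_mul (by positivity)]
        rw [ENNReal.ofReal_pow (by norm_num), ENNReal.ofReal_natCast]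
        norm_num

lemma meas_goodEv_le [IsProbabilityMeasure P] (M1 : ℕ) (ρ : ℝ) (hρ0 : 0 ≤ ρ)
    (F : ℕ → MeasurableSpace (Omega d N))
    (hmeas : ∀ (n : ℕ) (l : Fin d → Fin (N ^ n)), Measurable[F n] fun ω => A n ω l)
    (hind : ProbabilityTheory.iIndep F P)
    (hA : ∀ (n : ℕ) (l : Fin d → Fin (N ^ n)), P {ω | A n ω l = true} ≤ ENNReal.ofReal ρ)
    (hcard : ∀ (n : ℕ) (l : Fin d → Fin (N ^ n)), ({l' | r n l' l}).ncard ≤ M1)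
    (c : CIdx d) (n₀ n : ℕ) (l : Fin d → Fin (N ^ (n₀ + n))) :
    P (goodEv d N A r c n₀ (n₀ + n) l) ≤
      min 1 (ENNReal.ofReal ((2 : ℝ) ^ ec d c * ((M1 : ℝ) * ρ))) ^ (n + 1) := by
  have heq := hind.meas_biInter (S := Finset.Icc n₀ (n₀ + n))
    (s := fun m => levelEv d N A r c (n₀ + n) m l)
    (fun m _ => measurable_levelEv A r F hmeas c (n₀ + n) m l)
  rw [goodEv, heq]
  have hcIcc : (Finset.Icc n₀ (n₀ + n)).card = n + 1 := by
    rw [Nat.card_Icc]; omega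
  rw [← hcIcc]
  exact Finset.prod_le_pow_card _ _ _ fun m _ =>
    meas_levelEv_le A r P M1 ρ hρ0 hA hcard c (n₀ + n) m l

lemma lintegral_XBar_le [IsProbabilityMeasure P] (M1 : ℕ) (ρ : ℝ) (hρ0 : 0 ≤ ρ)
    (F : ℕ → MeasurableSpace (Omega d N))
    (hmeas : ∀ (n : ℕ) (l : Fin d → Fin (N ^ n)), Measurable[F n] fun ω => A n ω l)
    (hind : ProbabilityTheory.iIndep F P)
    (hA : ∀ (n : ℕ) (l : Fin d → Fin (N ^ n)), P {ω | A n ω l = true} ≤ ENNReal.ofReal ρ)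
    (hcard : ∀ (n : ℕ) (l : Fin d → Fin (N ^ n)), ({l' | r n l' l}).ncard ≤ M1)
    (c : CIdx d) (n₀ n : ℕ) :
    ∫⁻ ω, XBar d N A r P c n₀ (n₀ + n) ω ∂P ≤
      ((Fgood d N c (n₀ + n)).card : ℝ≥0∞) *
        min 1 (ENNReal.ofReal ((2 : ℝ) ^ ec d c * ((M1 : ℝ) * ρ))) ^ (n + 1) := by
  classical
  have hXB : ∫⁻ ω, XBar d N A r P c n₀ (n₀ + n) ω ∂P
      = ∑ l ∈ Fgood d N c (n₀ + n), P (goodEv d N A r c n₀ (n₀ + n) l) := by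
    unfold XBar
    rw [lintegral_finset_sum _
      (fun l _ => measurable_const.indicator (measurableSet_toMeasurable P _))]
    refine Finset.sum_congr rfl fun l _ => ?_
    rw [lintegral_indicator_const (measurableSet_toMeasurable P _), one_mul,
      measure_toMeasurable]
  rw [hXB]
  refine le_trans (Finset.sum_le_card_nsmul _ _ _ fun l _ =>
    meas_goodEv_le A r P M1 ρ hρ0 F hmeas hind hA hcard c n₀ n l) ?_
  rw [nsmul_eq_mul]

/-! ### Arithmetic -/

lemma arith1 (hN : 2 ≤ N) (c : CIdx d) (hEd : ec d c ≤ d) (M1 : ℕ) (ρ : ℝ) (hρ0 : 0 ≤ ρ) :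
    (N : ℝ) ^ (d - ec d c) * min 1 ((2 : ℝ) ^ ec d c * ((M1 : ℝ) * ρ)) ≤
      max ((M1 : ℝ) * ρ * (N : ℝ) ^ d) 1 := by
  set E := ec d c with hEdef
  have hN2 : (2:ℝ) ≤ (N:ℝ) := by exact_mod_cast hN
  have h2E : (2:ℝ) ^ E ≤ (N:ℝ) ^ E := pow_le_pow_left₀ (by norm_num) hN2 E
  have hNpow : (N:ℝ) ^ (d - E) * (N:ℝ) ^ E = (N:ℝ) ^ d := by
    rw [← pow_add]; congr 1; omega
  have hNpos : (0:ℝ) < (N:ℝ) ^ (d - E) := by positivity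
  have hM0 : (0:ℝ) ≤ (M1:ℝ) * ρ := by positivity
  rcases le_total ((2:ℝ) ^ E * ((M1:ℝ) * ρ)) 1 with h | h
  · rw [min_eq_right h]
    refine le_trans ?_ (le_max_left _ _)
    calc (N:ℝ) ^ (d - E) * ((2:ℝ) ^ E * ((M1:ℝ) * ρ))
        ≤ (N:ℝ) ^ (d - E) * ((N:ℝ) ^ E * ((M1:ℝ) * ρ)) := by
          apply mul_le_mul_of_nonneg_left _ hNpos.le
          exact mul_le_mul_of_nonneg_right h2E hM0
      _ = ((N:ℝ) ^ (d - E) * (N:ℝ) ^ E) * ((M1:ℝ) * ρ) := by ring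
      _ = (M1:ℝ) * ρ * (N:ℝ) ^ d := by rw [hNpow]; ring
  · rw [min_eq_left h]
    refine le_trans ?_ (le_max_left _ _)
    rw [mul_one]
    calc (N:ℝ) ^ (d - E) = (N:ℝ) ^ (d - E) * 1 := by ring
      _ ≤ (N:ℝ) ^ (d - E) * ((2:ℝ) ^ E * ((M1:ℝ) * ρ)) :=
          mul_le_mul_of_nonneg_left h hNpos.le
      _ = ((N:ℝ) ^ (d - E) * (2:ℝ) ^ E) * ((M1:ℝ) * ρ) := by ring
      _ ≤ ((N:ℝ) ^ (d - E) * (N:ℝ) ^ E) * ((M1:ℝ) * ρ) := by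
          apply mul_le_mul_of_nonneg_right _ hM0
          exact mul_le_mul_of_nonneg_left h2E hNpos.le
      _ = (M1:ℝ) * ρ * (N:ℝ) ^ d := by rw [hNpow]; ring

lemma arith2 (hN : 2 ≤ N) (M1 : ℕ) (ρ : ℝ) (j : ℕ) :
    max ((M1 : ℝ) * ρ * (N : ℝ) ^ d) 1 <
      (N : ℝ) ^ (Real.log (max ((M1 : ℝ) * ρ * (N : ℝ) ^ d) 1) / Real.log N
        + 1 / (j + 1) : ℝ) := by
  set Y := max ((M1:ℝ) * ρ * (N:ℝ) ^ d) 1 with hY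
  have hY1 : (1:ℝ) ≤ Y := le_max_right _ _
  have hY0 : (0:ℝ) < Y := lt_of_lt_of_le one_pos hY1
  have hN1 : (1:ℝ) < (N:ℝ) := by
    have : (1:ℕ) < N := by omega
    exact_mod_cast this
  have hN0 : (0:ℝ) < (N:ℝ) := lt_trans one_pos hN1
  have hlogN : Real.log N ≠ 0 := ne_of_gt (Real.log_pos hN1)
  have hSS : (N:ℝ) ^ (Real.log Y / Real.log N : ℝ) = Y := by
    rw [Real.rpow_def_of_pos hN0, mul_comm, div_mul_cancel₀ _ hlogN, Real.exp_log hY0]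
  rw [Real.rpow_add hN0, hSS]
  nth_rewrite 1 [← mul_one Y]
  refine mul_lt_mul_of_pos_left ?_ hY0
  refine (Real.one_lt_rpow_iff_of_pos hN0).mpr (Or.inl ⟨hN1, by positivity⟩)

lemma ec_le (c : CIdx d) : ec d c ≤ d := by
  simpa [ec] using Finset.card_filter_le Finset.univ (fun i : Fin d => (c.2 i).isSome)

/-- The fundamental summability estimate. -/
lemma tsum_lintegral_termB_ne_top [IsProbabilityMeasure P]
    (hN : 2 ≤ N) (hd : 1 ≤ d) (M1 : ℕ) (ρ : ℝ) (hρ0 : 0 ≤ ρ)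
    (F : ℕ → MeasurableSpace (Omega d N))
    (hmeas : ∀ (n : ℕ) (l : Fin d → Fin (N ^ n)), Measurable[F n] fun ω => A n ω l)
    (hind : ProbabilityTheory.iIndep F P)
    (hA : ∀ (n : ℕ) (l : Fin d → Fin (N ^ n)), P {ω | A n ω l = true} ≤ ENNReal.ofReal ρ)
    (hcard : ∀ (n : ℕ) (l : Fin d → Fin (N ^ n)), ({l' | r n l' l}).ncard ≤ M1)
    (c : CIdx d) (n₀ : ℕ) (s' : ℝ) (hs' : 0 < s')
    (hlt : (N : ℝ) ^ (d - ec d c) * min 1 ((2 : ℝ) ^ ec d c * ((M1 : ℝ) * ρ)) <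
      (N : ℝ) ^ s') :
    ∑' n : ℕ, ∫⁻ ω, termB d N A r P c n₀ s' n ω ∂P ≠ ∞ := by
  classical
  set E := ec d c with hEdef
  set Q : ℝ := min 1 ((2:ℝ) ^ E * ((M1:ℝ) * ρ)) with hQdef
  have hQ0 : 0 ≤ Q := le_min (by norm_num) (by positivity)
  set cc := d - E with hccdef
  have hN0 : (0:ℝ) < (N:ℝ) := by
    have : (0:ℕ) < N := by omega
    exact_mod_cast this
  have hNs : (0:ℝ) < (N:ℝ) ^ s' := Real.rpow_pos_of_pos hN0 _
  set B : ℝ := (N:ℝ) ^ cc * Q * (((N:ℝ) ^ s')⁻¹) with hBdef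
  have hB0 : 0 ≤ B := by positivity
  have hB1 : B < 1 := by
    have hBd : B = ((N:ℝ) ^ cc * Q) / ((N:ℝ) ^ s') := by rw [div_eq_mul_inv]
    rw [hBd]
    exact (div_lt_one hNs).mpr hlt
  set C : ℝ := (2:ℝ) ^ E * (N:ℝ) ^ (n₀ * cc) * (((d:ℝ) * (((N:ℝ) ^ n₀)⁻¹)) ^ s') with hCdef
  have hC0 : 0 ≤ C := by positivity
  have hterm : ∀ n : ℕ, ∫⁻ ω, termB d N A r P c n₀ s' n ω ∂P ≤
      ENNReal.ofReal C * (ENNReal.ofReal B) ^ n := by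
    intro n
    have hdpos : (0:ℝ) < (d:ℝ) * (((N:ℝ) ^ (n₀ + n))⁻¹) := by
      have : (0:ℕ) < d := by omega
      have hd0 : (0:ℝ) < (d:ℝ) := by exact_mod_cast this
      positivity
    have hconst : (ENNReal.ofReal ((d:ℝ) * (((N:ℝ) ^ (n₀ + n))⁻¹))) ^ s' ≠ ∞ :=
      ENNReal.rpow_ne_top_of_nonneg hs'.le ENNReal.ofReal_ne_top
    have h1 : ∫⁻ ω, termB d N A r P c n₀ s' n ω ∂P
        = (∫⁻ ω, XBar d N A r P c n₀ (n₀ + n) ω ∂P) *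
          (ENNReal.ofReal ((d:ℝ) * (((N:ℝ) ^ (n₀ + n))⁻¹))) ^ s' := by
      unfold termB
      exact lintegral_mul_const' _ _ hconst
    rw [h1]
    refine le_trans (mul_le_mul_left
      (lintegral_XBar_le A r P M1 ρ hρ0 F hmeas hind hA hcard c n₀ n) _) ?_
    -- pure arithmetic
    have hcard2 : ((Fgood d N c (n₀ + n)).card : ℝ≥0∞) ≤
        ENNReal.ofReal ((2:ℝ) ^ E * ((N:ℝ) ^ (n₀ + n)) ^ cc) := by
      have h := card_Fgood_le (N := N) c (n₀ + n)
      have hceq : ((2 ^ E * (N ^ (n₀ + n)) ^ cc : ℕ) : ℝ≥0∞)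
          = ENNReal.ofReal ((2:ℝ) ^ E * ((N:ℝ) ^ (n₀ + n)) ^ cc) := by
        rw [← ENNReal.ofReal_natCast]
        congr 1
        push_cast
        ring
      calc ((Fgood d N c (n₀ + n)).card : ℝ≥0∞)
          ≤ ((2 ^ E * (N ^ (n₀ + n)) ^ cc : ℕ) : ℝ≥0∞) := by exact_mod_cast h
        _ = _ := hceq
    have hq : min 1 (ENNReal.ofReal ((2:ℝ) ^ E * ((M1:ℝ) * ρ))) ≤ ENNReal.ofReal Q := by
      rcases le_total ((2:ℝ) ^ E * ((M1:ℝ) * ρ)) 1 with h | h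
      · rw [hQdef, min_eq_right h]; exact min_le_right _ _
      · rw [hQdef, min_eq_left h]
        exact le_trans (min_le_left _ _) (by simp)
    have hqpow : min 1 (ENNReal.ofReal ((2:ℝ) ^ E * ((M1:ℝ) * ρ))) ^ (n + 1) ≤
        (ENNReal.ofReal Q) ^ n := by
      refine le_trans (pow_le_pow_right_of_le_one' (min_le_left _ _) (Nat.le_succ n)) ?_
      exact pow_le_pow_left' hq n
    have hD : (ENNReal.ofReal ((d:ℝ) * (((N:ℝ) ^ (n₀ + n))⁻¹))) ^ s'
        = ENNReal.ofReal (((d:ℝ) * (((N:ℝ) ^ (n₀ + n))⁻¹)) ^ s') :=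
      ENNReal.ofReal_rpow_of_pos hdpos
    calc ((Fgood d N c (n₀ + n)).card : ℝ≥0∞) *
          min 1 (ENNReal.ofReal ((2:ℝ) ^ E * ((M1:ℝ) * ρ))) ^ (n + 1) *
          (ENNReal.ofReal ((d:ℝ) * (((N:ℝ) ^ (n₀ + n))⁻¹))) ^ s'
        ≤ ENNReal.ofReal ((2:ℝ) ^ E * ((N:ℝ) ^ (n₀ + n)) ^ cc) * (ENNReal.ofReal Q) ^ n *
          ENNReal.ofReal (((d:ℝ) * (((N:ℝ) ^ (n₀ + n))⁻¹)) ^ s') := by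
          rw [← hD]
          exact mul_le_mul' (mul_le_mul' hcard2 hqpow) le_rfl
      _ = ENNReal.ofReal ((2:ℝ) ^ E * ((N:ℝ) ^ (n₀ + n)) ^ cc * Q ^ n *
            (((d:ℝ) * (((N:ℝ) ^ (n₀ + n))⁻¹)) ^ s')) := by
          rw [← ENNReal.ofReal_pow hQ0, ← ENNReal.ofReal_mul (by positivity),
            ← ENNReal.ofReal_mul (by positivity)]
      _ = ENNReal.ofReal C * (ENNReal.ofReal B) ^ n := by
          rw [← ENNReal.ofReal_pow hB0, ← ENNReal.ofReal_mul hC0]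
          congr 1
          -- real identity
          have hsplit : (d:ℝ) * (((N:ℝ) ^ (n₀ + n))⁻¹)
              = ((d:ℝ) * (((N:ℝ) ^ n₀)⁻¹)) * (((N:ℝ) ^ n)⁻¹) := by
            rw [pow_add, mul_inv]; ring
          have hrp : (((d:ℝ) * (((N:ℝ) ^ (n₀ + n))⁻¹)) ^ s')
              = (((d:ℝ) * (((N:ℝ) ^ n₀)⁻¹)) ^ s') * ((((N:ℝ) ^ n)⁻¹) ^ s') := by
            rw [hsplit, Real.mul_rpow (by positivity) (by positivity)]
          have h3 : (((N:ℝ) ^ n)⁻¹) ^ s' = (((N:ℝ) ^ s')⁻¹) ^ n := by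
            rw [Real.inv_rpow (by positivity), ← Real.rpow_natCast (N:ℝ) n,
              ← Real.rpow_mul hN0.le, mul_comm, Real.rpow_mul hN0.le,
              Real.rpow_natCast, inv_pow]
          have h4 : ((N:ℝ) ^ (n₀ + n)) ^ cc = (N:ℝ) ^ (n₀ * cc) * ((N:ℝ) ^ cc) ^ n := by
            rw [← pow_mul, ← pow_mul, ← pow_add]
            congr 1
            ring
          rw [hrp, h3, h4, hBdef, hCdef]
          rw [mul_pow, mul_pow]
          ring
  refine ne_top_of_le_ne_top ?_ (ENNReal.tsum_le_tsum hterm)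
  rw [ENNReal.tsum_mul_left, ENNReal.tsum_geometric]
  refine ENNReal.mul_ne_top ENNReal.ofReal_ne_top (ENNReal.inv_ne_top.mpr ?_)
  exact (tsub_pos_of_lt (ENNReal.ofReal_lt_one.mpr hB1)).ne'

/-! ### Geometry : covering -/

lemma diam_gridCube_le (hN : 1 ≤ N) (hd : 1 ≤ d) (m : ℕ) (l : Fin d → Fin (N ^ m)) :
    EMetric.diam (gridCube d N m l) ≤ ENNReal.ofReal ((d : ℝ) * (((N : ℝ) ^ m)⁻¹)) := by
  refine EMetric.diam_le fun x hx y hy => ?_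
  rw [edist_dist]
  refine ENNReal.ofReal_le_ofReal ?_
  have hNm : (0:ℝ) < (N:ℝ) ^ m := by
    have : (0:ℕ) < N := by omega
    have h0 : (0:ℝ) < (N:ℝ) := by exact_mod_cast this
    positivity
  have hu0 : (0:ℝ) ≤ ((N:ℝ) ^ m)⁻¹ := by positivity
  have hcoord : ∀ i, |x i - y i| ≤ ((N:ℝ) ^ m)⁻¹ := by
    intro i
    obtain ⟨hx1, hx2⟩ := hx i
    obtain ⟨hy1, hy2⟩ := hy i
    have hlen : ((l i : ℝ) + 1) / (N:ℝ) ^ m = (l i : ℝ) / (N:ℝ) ^ m + ((N:ℝ) ^ m)⁻¹ := by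
      field_simp
    rw [abs_sub_le_iff]
    constructor <;> linarith
  rw [EuclideanSpace.dist_eq]
  have hsum : ∑ i, dist (x i) (y i) ^ 2 ≤ (d:ℝ) * (((N:ℝ) ^ m)⁻¹) ^ 2 := by
    refine le_trans (Finset.sum_le_card_nsmul _ _ ((((N:ℝ) ^ m)⁻¹) ^ 2) fun i _ => ?_) ?_
    · rw [Real.dist_eq]
      exact pow_le_pow_left₀ (abs_nonneg _) (hcoord i) 2
    · rw [nsmul_eq_mul]
      simp
  refine le_trans (Real.sqrt_le_sqrt hsum) ?_
  rw [Real.sqrt_mul (by positivity), Real.sqrt_sq hu0]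
  have h1 : (1:ℝ) ≤ (d:ℝ) := by exact_mod_cast hd
  have hsd : Real.sqrt d ≤ d := by
    nlinarith [Real.sq_sqrt (by positivity : (0:ℝ) ≤ (d:ℝ)), Real.sqrt_nonneg (d:ℝ)]
  exact mul_le_mul_of_nonneg_right hsd hu0

lemma covering (hN : 2 ≤ N) (k : ℕ) (c : CIdx d) (ω : Omega d N) (x : Euc d)
    (hxT : x ∈ Tset d N A r k ω) (hxc : x ∈ classSet d N c) (n : ℕ) :
    ∃ l ∈ counted d N A r c (max k c.1) (max k c.1 + n) ω,
      x ∈ gridCube d N (max k c.1 + n) l := by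
  classical
  set t := c.1 with htdef
  set n₀ := max k c.1 with hn0
  set Mt := n₀ + n with hMtdef
  have htMt : t ≤ Mt := by omega
  have hNR : (1:ℝ) < (N:ℝ) := by
    have : (1:ℕ) < N := by omega
    exact_mod_cast this
  have hN0 : (0:ℝ) < (N:ℝ) := by linarith
  have hNm : ∀ m : ℕ, (0:ℝ) < (N:ℝ) ^ m := fun m => by positivity
  have hlev : ∀ m : ℕ, k ≤ m → ∃ v : Fin d → Fin (N ^ m),
      (∃ l', r m l' v ∧ A m ω l' = true) ∧ x ∈ gridCube d N m v := by
    intro m hm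
    have h := Set.mem_iInter₂.mp hxT m hm
    rcases Set.mem_iUnion.mp h with ⟨v, hv⟩
    rcases Set.mem_iUnion.mp hv with ⟨hsel, hxg⟩
    exact ⟨v, hsel, hxg⟩
  obtain ⟨v0, _, hxv0⟩ := hlev k le_rfl
  have hx01 : ∀ i, 0 ≤ x i ∧ x i ≤ 1 := by
    intro i
    obtain ⟨h1, h2⟩ := hxv0 i
    constructor
    · refine le_trans ?_ h1
      positivity
    · refine le_trans h2 ?_
      rw [div_le_one (hNm k)]
      have hlt := (v0 i).isLt
      have : ((v0 i : ℕ) : ℝ) + 1 ≤ ((N ^ k : ℕ) : ℝ) := by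
        exact_mod_cast Nat.succ_le_of_lt hlt
      push_cast at this
      linarith
  have hfix : ∀ i a, c.2 i = some a → x i = (a:ℝ) / (N:ℝ) ^ t ∧ a ≤ N ^ t := by
    intro i a ha
    have h := hxc i
    rw [ha] at h
    simp only [Option.elim] at h
    refine ⟨h, ?_⟩
    have h2 := (hx01 i).2
    rw [h, div_le_one (hNm t)] at h2
    have : (a:ℝ) ≤ ((N ^ t : ℕ) : ℝ) := by push_cast; linarith
    exact_mod_cast this
  have hfree : ∀ i, c.2 i = none → (∀ b m : ℕ, x i ≠ (b:ℝ) / (N:ℝ) ^ m) := by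
    intro i hi
    have h := hxc i
    rw [hi] at h
    simpa using h
  have hfree01 : ∀ i, c.2 i = none → 0 ≤ x i ∧ x i < 1 := by
    intro i hi
    refine ⟨(hx01 i).1, lt_of_le_of_ne (hx01 i).2 ?_⟩
    intro h1
    exact hfree i hi 1 0 (by simpa using h1)
  have hMt1 : 1 ≤ N ^ Mt := Nat.one_le_pow _ _ (by omega)
  set rawval : Fin d → ℕ := fun i => (c.2 i).elim ⌊x i * (N:ℝ) ^ Mt⌋₊
      (fun a => a * N ^ (Mt - t)) with hraw
  set L : Fin d → Fin (N ^ Mt) := fun i => ⟨min (rawval i) (N ^ Mt - 1), by omega⟩ with hLdef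
  have hLfree : ∀ i, c.2 i = none → (L i : ℕ) = ⌊x i * (N:ℝ) ^ Mt⌋₊ := by
    intro i hi
    have hxnn : (0:ℝ) ≤ x i * (N:ℝ) ^ Mt :=
      mul_nonneg (hfree01 i hi).1 (hNm Mt).le
    have hlt : ⌊x i * (N:ℝ) ^ Mt⌋₊ < N ^ Mt := by
      rw [Nat.floor_lt hxnn]
      have := mul_lt_mul_of_pos_right (hfree01 i hi).2 (hNm Mt)
      rw [one_mul] at this
      push_cast
      linarith
    have hrv : rawval i = ⌊x i * (N:ℝ) ^ Mt⌋₊ := by rw [hraw]; simp [hi]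
    show min (rawval i) (N ^ Mt - 1) = ⌊x i * (N:ℝ) ^ Mt⌋₊
    rw [hrv, min_eq_left (by omega)]
  have hfixmul : ∀ i a, c.2 i = some a → a * N ^ (Mt - t) ≤ N ^ Mt := by
    intro i a ha
    have h2 := (hfix i a ha).2
    calc a * N ^ (Mt - t) ≤ N ^ t * N ^ (Mt - t) := Nat.mul_le_mul_right _ h2
      _ = N ^ Mt := by rw [← pow_add]; congr 1; omega
  have hLfix : ∀ i a, c.2 i = some a →
      (L i : ℕ) = min (a * N ^ (Mt - t)) (N ^ Mt - 1) := by
    intro i a ha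
    show min (rawval i) (N ^ Mt - 1) = _
    rw [hraw]; simp [ha]
  have hkeyfix : ∀ a : ℕ, ((a * N ^ (Mt - t) : ℕ) : ℝ) / (N:ℝ) ^ Mt = (a:ℝ) / (N:ℝ) ^ t := by
    intro a
    have hpow : (N:ℝ) ^ (Mt - t) * (N:ℝ) ^ t = (N:ℝ) ^ Mt := by
      rw [← pow_add]; congr 1; omega
    push_cast
    rw [div_eq_div_iff (hNm Mt).ne' (hNm t).ne', mul_assoc, hpow]
  have hLgood : L ∈ Fgood d N c Mt := by
    rw [Fgood, Finset.mem_filter]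
    refine ⟨Finset.mem_univ _, fun i => ?_⟩
    rcases hopt : c.2 i with _ | a
    · simp only [coordCond, hopt, Option.elim]
      rw [Nat.sub_self, pow_zero, Nat.div_one]
    · simp only [coordCond, hopt, Option.elim]
      have h2 := hfixmul i a hopt
      have h1 : (L i : ℕ) = min (a * N ^ (Mt - t)) (N ^ Mt - 1) := hLfix i a hopt
      rw [htdef] at h1 h2
      omega
  have hxL : x ∈ gridCube d N Mt L := by
    intro i
    rcases hopt : c.2 i with _ | a
    · have hfe := hLfree i hopt
      have hx0 := (hfree01 i hopt).1
      have hfl : (⌊x i * (N:ℝ) ^ Mt⌋₊ : ℝ) ≤ x i * (N:ℝ) ^ Mt :=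
        Nat.floor_le (by positivity)
      have hfu : x i * (N:ℝ) ^ Mt < (⌊x i * (N:ℝ) ^ Mt⌋₊ : ℝ) + 1 :=
        Nat.lt_floor_add_one _
      have hcast : ((L i : ℕ) : ℝ) = (⌊x i * (N:ℝ) ^ Mt⌋₊ : ℝ) := by
        exact_mod_cast congrArg (Nat.cast : ℕ → ℝ) hfe
      constructor
      · rw [div_le_iff₀ (hNm Mt)]
        rw [hcast]
        linarith
      · rw [le_div_iff₀ (hNm Mt)]
        rw [hcast]
        linarith
    · have hxa := (hfix i a hopt).1
      have h2 := hfixmul i a hopt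
      have hLi := hLfix i a hopt
      by_cases hc : a * N ^ (Mt - t) ≤ N ^ Mt - 1
      · have hLi2 : (L i : ℕ) = a * N ^ (Mt - t) := by omega
        have hLr : ((L i : ℕ) : ℝ) / (N:ℝ) ^ Mt = (a:ℝ) / (N:ℝ) ^ t := by
          rw [hLi2]
          exact_mod_cast hkeyfix a
        constructor
        · rw [hxa, ← hLr]
        · rw [hxa, ← hLr]
          have := (hNm Mt)
          rw [div_le_div_iff₀ this this]
          nlinarith
      · have heq : a * N ^ (Mt - t) = N ^ Mt := by omega
        have hLi2 : (L i : ℕ) = N ^ Mt - 1 := by omega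
        have hx1 : x i = 1 := by
          rw [hxa, div_eq_one_iff_eq (hNm t).ne']
          have h3 : ((a * N ^ (Mt - t) : ℕ) : ℝ) / (N:ℝ) ^ Mt = 1 := by
            rw [heq]
            push_cast
            exact div_self (hNm Mt).ne'
          rw [hkeyfix a, div_eq_one_iff_eq (hNm t).ne'] at h3
          exact h3
        have hcastL : ((L i : ℕ) : ℝ) = (N:ℝ) ^ Mt - 1 := by
          rw [hLi2]
          push_cast [Nat.cast_sub hMt1]
          ring
        constructor
        · rw [hx1, div_le_one (hNm Mt), hcastL]
          linarith
        · rw [hx1, le_div_iff₀ (hNm Mt), hcastL]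
          ring_nf
          linarith [hNm Mt]
  have hLgoodEv : ω ∈ goodEv d N A r c n₀ Mt L := by
    rw [goodEv]
    refine Set.mem_iInter₂.mpr fun m hm => ?_
    rw [Finset.mem_Icc] at hm
    have hkm : k ≤ m := le_trans (le_max_left k t) hm.1
    obtain ⟨v, hsel, hxv⟩ := hlev m hkm
    refine Set.mem_iUnion₂.mpr ⟨v, ?_, hsel⟩
    rw [candF, Finset.mem_filter]
    refine ⟨Finset.mem_univ _, fun i => ?_⟩
    rcases hopt : c.2 i with _ | a
    · simp only [coordCond, hopt, Option.elim]
      have hx0 := (hfree01 i hopt).1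
      have hne := hfree i hopt
      obtain ⟨hv1, hv2⟩ := hxv i
      have hv1' : ((v i : ℕ) : ℝ) / (N:ℝ) ^ m < x i :=
        lt_of_le_of_ne hv1 (fun h => hne (v i) m h.symm)
      have hv2' : x i < (((v i : ℕ) : ℝ) + 1) / (N:ℝ) ^ m := by
        refine lt_of_le_of_ne hv2 (fun h => hne ((v i : ℕ) + 1) m ?_)
        rw [h]
        push_cast
        ring_nf
      have hfloor : (v i : ℕ) = ⌊x i * (N:ℝ) ^ m⌋₊ := by
        symm
        rw [Nat.floor_eq_iff (by positivity)]
        constructor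
        · exact le_of_lt ((div_lt_iff₀ (hNm m)).mp hv1')
        · exact (lt_div_iff₀ (hNm m)).mp hv2'
      have hLi : (L i : ℕ) = ⌊x i * (N:ℝ) ^ Mt⌋₊ := hLfree i hopt
      have harg : x i * (N:ℝ) ^ Mt / ((N ^ (Mt - m) : ℕ) : ℝ) = x i * (N:ℝ) ^ m := by
        push_cast
        rw [div_eq_iff (by positivity), mul_assoc, ← pow_add]
        congr 2
        omega
      have hLi' : (rawval i ⊓ (N ^ Mt - 1)) = ⌊x i * (N:ℝ) ^ Mt⌋₊ := hLfree i hopt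
      rw [hfloor, hLi, ← Nat.floor_div_natCast (x i * (N:ℝ) ^ Mt) (N ^ (Mt - m)), harg]
    · simp only [coordCond, hopt, Option.elim]
      have hxa := (hfix i a hopt).1
      obtain ⟨hv1, hv2⟩ := hxv i
      have htm : t ≤ m := le_trans (le_max_right k t) hm.1
      have hxm : x i * (N:ℝ) ^ m = ((a * N ^ (m - t) : ℕ) : ℝ) := by
        rw [hxa]
        push_cast
        rw [div_mul_eq_mul_div, div_eq_iff (hNm t).ne', mul_assoc, ← pow_add]
        congr 2
        omega
      have h1 : (v i : ℕ) ≤ a * N ^ (m - t) := by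
        have h := (div_le_iff₀ (hNm m)).mp hv1
        rw [hxm] at h
        exact_mod_cast h
      have h2 : a * N ^ (m - t) ≤ (v i : ℕ) + 1 := by
        have h := (le_div_iff₀ (hNm m)).mp hv2
        rw [hxm] at h
        have : ((a * N ^ (m - t) : ℕ) : ℝ) ≤ ((v i : ℕ) : ℝ) + 1 := h
        exact_mod_cast this
      rw [htdef] at h1 h2
      omega
  refine ⟨L, ?_, hxL⟩
  rw [counted, Finset.mem_filter]
  exact ⟨hLgood, hLgoodEv⟩

lemma exists_class (hN : 1 ≤ N) (x : Euc d) : ∃ c : CIdx d, x ∈ classSet d N c := by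
  classical
  have hN0 : (0:ℝ) < (N:ℝ) := by
    have : (0:ℕ) < N := by omega
    exact_mod_cast this
  have hch : ∀ i : Fin d, ∃ bt : ℕ × ℕ, (∃ b s : ℕ, x i = (b:ℝ) / (N:ℝ) ^ s) →
      x i = (bt.1 : ℝ) / (N:ℝ) ^ bt.2 := by
    intro i
    by_cases h : ∃ b s : ℕ, x i = (b:ℝ) / (N:ℝ) ^ s
    · obtain ⟨b, s, hbs⟩ := h
      exact ⟨(b, s), fun _ => hbs⟩
    · exact ⟨(0, 0), fun hc => absurd hc h⟩
  choose g hg using hch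
  set T : ℕ := ∑ i, (g i).2 with hT
  refine ⟨(T, fun i => if ∃ b s : ℕ, x i = (b:ℝ) / (N:ℝ) ^ s
      then some ((g i).1 * N ^ (T - (g i).2)) else none), ?_⟩
  simp only [classSet, Set.mem_setOf_eq]
  intro i
  by_cases h : ∃ b s : ℕ, x i = (b:ℝ) / (N:ℝ) ^ s
  · simp only [h, if_pos, Option.elim]
    have hxi := hg i h
    have ht : (g i).2 ≤ T := Finset.single_le_sum
      (f := fun i => (g i).2) (fun _ _ => Nat.zero_le _) (Finset.mem_univ i)
    have hpow : (N:ℝ) ^ (T - (g i).2) * (N:ℝ) ^ (g i).2 = (N:ℝ) ^ T := by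
      rw [← pow_add]; congr 1; omega
    rw [hxi]
    push_cast
    rw [div_eq_div_iff (by positivity) (by positivity), mul_assoc, hpow]
  · simp only [h, if_neg, Option.elim]
    push_neg at h
    exact h

end P11

open P11

/-- (Supermartingale dimension bound.) -/
theorem dimH_selected_cubes_le
    (d N : ℕ) (hd : 2 ≤ d) (hN : 2 ≤ N) (p : ℝ) (hp0 : 0 ≤ p) (hp1 : p ≤ 1)
    (P : Measure (Omega d N)) (hP : IsPercMeasure d N p P)
    (F : ℕ → MeasurableSpace (Omega d N))
    (hsub : ∀ (n : ℕ) (s : Set (Omega d N)), MeasurableSet[F n] s → NullMeasurableSet s P)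
    (hind : ProbabilityTheory.iIndep F P)
    (A : (n : ℕ) → Omega d N → (Fin d → Fin (N ^ n)) → Bool)
    (hmeas : ∀ (n : ℕ) (l : Fin d → Fin (N ^ n)), Measurable[F n] fun ω => A n ω l)
    (ρ : ℝ) (hρ0 : 0 ≤ ρ) (hρ1 : ρ ≤ 1)
    (hA : ∀ (n : ℕ) (l : Fin d → Fin (N ^ n)), P {ω | A n ω l = true} ≤ ENNReal.ofReal ρ)
    (M1 : ℕ) (r : (n : ℕ) → (Fin d → Fin (N ^ n)) → (Fin d → Fin (N ^ n)) → Prop)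
    (hrefl : ∀ (n : ℕ) (l : Fin d → Fin (N ^ n)), r n l l)
    (hcard : ∀ (n : ℕ) (l : Fin d → Fin (N ^ n)), ({l' | r n l' l}).ncard ≤ M1) :
    ∀ k : ℕ, ∀ᵐ ω ∂P,
      dimH (⋂ n ∈ {m : ℕ | k ≤ m}, ⋃ l : Fin d → Fin (N ^ n),
          ⋃ _ : ∃ l', r n l' l ∧ A n ω l' = true, gridCube d N n l) ≤
        ENNReal.ofReal (Real.log (max ((M1 : ℝ) * ρ * (N : ℝ) ^ d) 1) / Real.log N) := by
  intro k
  classical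
  haveI : IsProbabilityMeasure P := hP.1
  set SS : ℝ := Real.log (max ((M1 : ℝ) * ρ * (N : ℝ) ^ d) 1) / Real.log N with hSSdef
  have hN1R : (1:ℝ) ≤ (N:ℝ) := by
    have : (1:ℕ) ≤ N := by omega
    exact_mod_cast this
  have hSS0 : 0 ≤ SS := div_nonneg (Real.log_nonneg (le_max_right _ _))
    (Real.log_nonneg hN1R)
  have hs'0 : ∀ j : ℕ, (0:ℝ) < SS + 1 / (j + 1) := fun j =>
    add_pos_of_nonneg_of_pos hSS0 (by positivity)
  have hae : ∀ (c : CIdx d) (j : ℕ), ∀ᵐ ω ∂P,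
      Filter.Tendsto (fun n => termB d N A r P c (max k c.1) (SS + 1 / (j + 1)) n ω)
        Filter.atTop (nhds 0) := by
    intro c j
    have hlt : (N:ℝ) ^ (d - ec d c) * min 1 ((2:ℝ) ^ ec d c * ((M1:ℝ) * ρ)) <
        (N:ℝ) ^ (SS + 1 / (j + 1) : ℝ) :=
      lt_of_le_of_lt (arith1 hN c (ec_le c) M1 ρ hρ0) (arith2 hN M1 ρ j)
    have hsum := tsum_lintegral_termB_ne_top A r P hN (by omega) M1 ρ hρ0 F hmeas hind
      hA hcard c (max k c.1) (SS + 1 / (j + 1)) (hs'0 j) hlt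
    have hmeasT : ∀ n : ℕ,
        Measurable (fun ω => termB d N A r P c (max k c.1) (SS + 1 / (j + 1)) n ω) := by
      intro n
      exact (Finset.measurable_sum _ (fun l _ =>
        measurable_const.indicator (measurableSet_toMeasurable P _))).mul_const _
    have hint : ∫⁻ ω, ∑' n, termB d N A r P c (max k c.1) (SS + 1 / (j + 1)) n ω ∂P ≠ ∞ := by
      rw [lintegral_tsum (fun n => (hmeasT n).aemeasurable)]
      exact hsum
    have hfin := ae_lt_top (Measurable.ennreal_tsum hmeasT) hint
    filter_upwards [hfin] with ω hω
    exact ENNReal.tendsto_atTop_zero_of_tsum_ne_top hω.ne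
  have hae2 : ∀ᵐ ω ∂P, ∀ (c : CIdx d) (j : ℕ),
      Filter.Tendsto (fun n => termB d N A r P c (max k c.1) (SS + 1 / (j + 1)) n ω)
        Filter.atTop (nhds 0) := by
    rw [MeasureTheory.ae_all_iff]
    intro c
    rw [MeasureTheory.ae_all_iff]
    exact hae c
  filter_upwards [hae2] with ω hω
  show dimH (Tset d N A r k ω) ≤ ENNReal.ofReal SS
  have hdim : ∀ j : ℕ, dimH (Tset d N A r k ω) ≤ ENNReal.ofReal (SS + 1 / (j + 1)) := by
    intro j
    have hsub : Tset d N A r k ω ⊆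
        ⋃ c : CIdx d, (Tset d N A r k ω ∩ classSet d N c) := by
      intro x hx
      obtain ⟨c, hc⟩ := exists_class (N := N) (by omega) x
      exact Set.mem_iUnion.mpr ⟨c, hx, hc⟩
    refine le_trans (dimH_mono hsub) ?_
    rw [dimH_iUnion]
    refine iSup_le fun c => ?_
    have htd := hω c j
    -- Hausdorff measure zero
    have hμ : μH[(SS + 1 / (j + 1) : ℝ)] (Tset d N A r k ω ∩ classSet d N c) = 0 := by
      refine le_antisymm ?_ zero_le
      have hrtend : Filter.Tendsto
          (fun n : ℕ => ENNReal.ofReal ((d:ℝ) * (((N:ℝ) ^ (max k c.1 + n))⁻¹)))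
          Filter.atTop (nhds 0) := by
        have h1N : (0:ℝ) < (N:ℝ) := by
          have : (0:ℕ) < N := by omega
          exact_mod_cast this
        have hinv : Filter.Tendsto (fun n : ℕ => ((1:ℝ) / N) ^ n) Filter.atTop (nhds 0) :=
          tendsto_pow_atTop_nhds_zero_of_lt_one (by positivity)
            (by rw [div_lt_one h1N]; exact_mod_cast (by omega : 1 < N))
        have hshift := hinv.comp (Filter.tendsto_add_atTop_nat (max k c.1))
        have hmul := hshift.const_mul (d:ℝ)
        rw [mul_zero] at hmul
        have heq : (fun n : ℕ => (d:ℝ) * (((N:ℝ) ^ (max k c.1 + n))⁻¹))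
            = fun n : ℕ => (d:ℝ) * ((1:ℝ) / N) ^ (n + max k c.1) := by
          funext n
          rw [add_comm, one_div, inv_pow]
        rw [show (0 : ℝ≥0∞) = ENNReal.ofReal 0 by simp]
        apply ENNReal.tendsto_ofReal
        rw [heq]
        simpa [Function.comp] using hmul
      have hcover := MeasureTheory.Measure.hausdorffMeasure_le_liminf_sum
        (ι := fun n : ℕ => (Fin d → Fin (N ^ (max k c.1 + n))))
        (SS + 1 / (j + 1)) (Tset d N A r k ω ∩ classSet d N c)
        (fun n : ℕ => ENNReal.ofReal ((d:ℝ) * (((N:ℝ) ^ (max k c.1 + n))⁻¹)))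
        hrtend
        (fun n l => if l ∈ counted d N A r c (max k c.1) (max k c.1 + n) ω
          then gridCube d N (max k c.1 + n) l else ∅)
        (Filter.Eventually.of_forall fun n => by
          intro l
          split
          · exact diam_gridCube_le (by omega) (by omega) _ l
          · simp)
        (Filter.Eventually.of_forall fun n => by
          rintro x ⟨hxT, hxc⟩
          obtain ⟨l, hl, hxl⟩ := covering A r hN k c ω x hxT hxc n
          refine Set.mem_iUnion.mpr ⟨l, ?_⟩
          rw [if_pos hl]
          exact hxl)
      refine le_trans hcover ?_
      have hle : ∀ n : ℕ,
          (∑ l : Fin d → Fin (N ^ (max k c.1 + n)),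
            EMetric.diam (if l ∈ counted d N A r c (max k c.1) (max k c.1 + n) ω
              then gridCube d N (max k c.1 + n) l else ∅) ^ (SS + 1 / (j + 1) : ℝ))
          ≤ termB d N A r P c (max k c.1) (SS + 1 / (j + 1)) n ω := by
        intro n
        set D : ℝ≥0∞ :=
          (ENNReal.ofReal ((d:ℝ) * (((N:ℝ) ^ (max k c.1 + n))⁻¹))) ^ (SS + 1 / (j + 1) : ℝ)
          with hD
        have hsum1 : ∀ l : Fin d → Fin (N ^ (max k c.1 + n)),
            EMetric.diam (if l ∈ counted d N A r c (max k c.1) (max k c.1 + n) ω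
              then gridCube d N (max k c.1 + n) l else ∅) ^ (SS + 1 / (j + 1) : ℝ)
            ≤ (if l ∈ counted d N A r c (max k c.1) (max k c.1 + n) ω then D else 0) := by
          intro l
          split
          · exact ENNReal.rpow_le_rpow (diam_gridCube_le (by omega) (by omega) _ l) (hs'0 j).le
          · rw [show EMetric.diam (∅ : Set (Euc d)) = 0 from EMetric.diam_empty]
            exact le_of_eq (ENNReal.zero_rpow_of_pos (hs'0 j))
        refine le_trans (Finset.sum_le_sum (fun l _ => hsum1 l)) ?_
        rw [Finset.sum_ite_mem, Finset.univ_inter, Finset.sum_const, nsmul_eq_mul]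
        unfold termB
        refine mul_le_mul_left ?_ _
        unfold XBar
        unfold counted
        rw [Finset.card_filter]
        push_cast
        refine Finset.sum_le_sum fun l _ => ?_
        rw [Set.indicator_apply]
        by_cases hg : ω ∈ goodEv d N A r c (max k c.1) (max k c.1 + n) l
        · rw [if_pos hg, if_pos (subset_toMeasurable P _ hg)]
        · rw [if_neg hg]
          exact zero_le
      calc Filter.liminf (fun n : ℕ =>
            ∑ l : Fin d → Fin (N ^ (max k c.1 + n)),
              EMetric.diam (if l ∈ counted d N A r c (max k c.1) (max k c.1 + n) ω
                then gridCube d N (max k c.1 + n) l else ∅) ^ (SS + 1 / (j + 1) : ℝ))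
            Filter.atTop
          ≤ Filter.liminf
              (fun n => termB d N A r P c (max k c.1) (SS + 1 / (j + 1)) n ω)
              Filter.atTop :=
            Filter.liminf_le_liminf (Filter.Eventually.of_forall hle)
        _ = 0 := htd.liminf_eq
    -- conclude dimH bound
    have hcoe : (((SS + 1 / (j + 1) : ℝ).toNNReal : ℝ≥0) : ℝ) = SS + 1 / (j + 1) :=
      Real.coe_toNNReal _ (hs'0 j).le
    have hμ' : μH[(((SS + 1 / (j + 1) : ℝ).toNNReal : ℝ≥0) : ℝ)]
        (Tset d N A r k ω ∩ classSet d N c) = 0 := by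
      rw [hcoe]; exact hμ
    have hd2 := dimH_le_of_hausdorffMeasure_ne_top (X := Euc d)
      (s := Tset d N A r k ω ∩ classSet d N c)
      (d := (SS + 1 / (j + 1) : ℝ).toNNReal) (by rw [hμ']; exact ENNReal.zero_ne_top)
    exact le_trans hd2 le_rfl
  refine ENNReal.le_of_forall_pos_le_add fun ε hε _ => ?_
  obtain ⟨j, hj⟩ := exists_nat_gt (1 / (ε:ℝ))
  refine le_trans (hdim j) ?_
  refine le_trans ENNReal.ofReal_add_le ?_
  refine add_le_add_right ?_ _
  have hεR : (0:ℝ) < (ε:ℝ) := hε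
  have h1 : (1:ℝ) / (j + 1) ≤ (ε:ℝ) := by
    rw [div_le_iff₀ (by positivity)]
    rw [div_lt_iff₀ hεR] at hj
    nlinarith
  calc ENNReal.ofReal (1 / (j + 1)) ≤ ENNReal.ofReal (ε:ℝ) :=
        ENNReal.ofReal_le_ofReal h1
    _ = (ε : ℝ≥0∞) := ENNReal.ofReal_coe_nnreal
end
end

section
/- Let γ : I → ℝ^d be an α-Hölder curve for some 0 < α ≤ 1. Then there is a countable collection of curves γ_i : I → ℝ^d, i ∈ ℕ, such that each γ_i is (i,α)-Hölder and γ(I) ⊂ ⋃_{i=1}^∞ γ_i(I). -/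
open MeasureTheory Set
open scoped ENNReal NNReal

noncomputable section

open FracPerc


/-- Subadditivity of `x ↦ x^α` on nonnegative reals, for `0 < α ≤ 1`. -/
lemma holder_cover_subadd {α : ℝ} (hα0 : 0 < α) (hα1 : α ≤ 1) {x y : ℝ}
    (hx : 0 ≤ x) (hy : 0 ≤ y) : (x + y) ^ α ≤ x ^ α + y ^ α := by
  have h := NNReal.rpow_add_le_add_rpow x.toNNReal y.toNNReal hα0.le hα1
  have h' : (((x.toNNReal + y.toNNReal) ^ α : ℝ≥0) : ℝ)
      ≤ ((x.toNNReal ^ α : ℝ≥0) : ℝ) + ((y.toNNReal ^ α : ℝ≥0) : ℝ) := by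
    exact_mod_cast h
  simpa [NNReal.coe_rpow, Real.coe_toNNReal x hx, Real.coe_toNNReal y hy,
    Real.toNNReal_add hx hy] using h'

lemma holder_cover_triangle {α : ℝ} (hα0 : 0 < α) (hα1 : α ≤ 1) (t t' s : ℝ) :
    |t - s| ^ α ≤ |t - t'| ^ α + |t' - s| ^ α := by
  have h1 : |t - s| ≤ |t - t'| + |t' - s| := abs_sub_le t t' s
  calc |t - s| ^ α ≤ (|t - t'| + |t' - s|) ^ α :=
        Real.rpow_le_rpow (abs_nonneg _) h1 hα0.le
    _ ≤ |t - t'| ^ α + |t' - s| ^ α :=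
        holder_cover_subadd hα0 hα1 (abs_nonneg _) (abs_nonneg _)

/-- McShane extension of a Hölder function from a bounded subset of `ℝ`. -/
lemma holder_cover_mcshane {α : ℝ} (hα0 : 0 < α) (hα1 : α ≤ 1) (c : ℝ) (hc : 0 ≤ c)
    (a b : ℝ) (A : Set ℝ) (hAsub : A ⊆ Icc a b) (hA : A.Nonempty)
    (φ : ℝ → ℝ) (hφ : ∀ t ∈ A, ∀ s ∈ A, |φ t - φ s| ≤ c * |t - s| ^ α) :
    ∃ f : ℝ → ℝ, (∀ t ∈ A, f t = φ t) ∧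
      ∀ t s : ℝ, |f t - f s| ≤ c * |t - s| ^ α := by
  obtain ⟨s₀, hs₀⟩ := hA
  set F : ℝ → Set ℝ := fun t => (fun s => φ s + c * |t - s| ^ α) '' A with hF
  have hne : ∀ t, (F t).Nonempty := fun t => ⟨_, ⟨s₀, hs₀, rfl⟩⟩
  have hbdd : ∀ t, BddBelow (F t) := by
    intro t
    refine ⟨φ s₀ - c * (b - a) ^ α, ?_⟩
    rintro y ⟨s, hs, rfl⟩
    dsimp only
    have h1 : |φ s₀ - φ s| ≤ c * |s₀ - s| ^ α := hφ s₀ hs₀ s hs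
    have h2 : |s₀ - s| ≤ b - a := by
      have := hAsub hs₀; have := hAsub hs
      rw [abs_sub_le_iff]; constructor <;> linarith [(hAsub hs₀).1, (hAsub hs₀).2,
        (hAsub hs).1, (hAsub hs).2]
    have h3 : |s₀ - s| ^ α ≤ (b - a) ^ α :=
      Real.rpow_le_rpow (abs_nonneg _) h2 hα0.le
    have h4 : c * |s₀ - s| ^ α ≤ c * (b - a) ^ α := mul_le_mul_of_nonneg_left h3 hc
    have h5 : φ s₀ - φ s ≤ c * (b - a) ^ α := le_trans (le_abs_self _) (le_trans h1 h4)
    have h6 : 0 ≤ c * |t - s| ^ α :=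
      mul_nonneg hc (Real.rpow_nonneg (abs_nonneg _) _)
    linarith
  set f : ℝ → ℝ := fun t => sInf (F t) with hfdef
  have key : ∀ t s : ℝ, f t ≤ f s + c * |t - s| ^ α := by
    intro t s
    have : f t - c * |t - s| ^ α ≤ f s := by
      apply le_csInf (hne s)
      rintro y ⟨u, hu, rfl⟩
      dsimp only
      have h1 : f t ≤ φ u + c * |t - u| ^ α := csInf_le (hbdd t) ⟨u, hu, rfl⟩
      have h2 : |t - u| ^ α ≤ |t - s| ^ α + |s - u| ^ α :=
        holder_cover_triangle hα0 hα1 t s u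
      have h3 : c * |t - u| ^ α ≤ c * |t - s| ^ α + c * |s - u| ^ α := by
        nlinarith
      linarith
    linarith
  refine ⟨f, ?_, ?_⟩
  · intro t ht
    have h1 : f t ≤ φ t := by
      have : f t ≤ φ t + c * |t - t| ^ α := csInf_le (hbdd t) ⟨t, ht, rfl⟩
      simpa [Real.zero_rpow hα0.ne'] using this
    have h2 : φ t ≤ f t := by
      apply le_csInf (hne t)
      rintro y ⟨u, hu, rfl⟩
      dsimp only
      have := hφ t ht u hu
      have := abs_sub_le_iff.mp this
      linarith [this.1]
    linarith
  · intro t s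
    rw [abs_sub_le_iff]
    constructor
    · have := key t s; linarith
    · have := key s t
      have heq : |s - t| = |t - s| := abs_sub_comm s t
      rw [heq] at this; linarith


/-- An `α`-Hölder curve can be covered by countably many
`(i,α)`-Hölder curves. -/
theorem holder_cover
    (d : ℕ) (α : ℝ) (hα0 : 0 < α) (hα1 : α ≤ 1)
    (a b : ℝ) (hab : a ≤ b) (γ : ℝ → Euc d)
    (hHol : ∀ t ∈ Icc a b, ∃ H : ℝ, 0 ≤ H ∧
      ∀ s ∈ Icc a b, dist (γ t) (γ s) ≤ H * |t - s| ^ α) :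
    ∃ g : ℕ → ℝ → Euc d,
      (∀ i : ℕ, ∀ t ∈ Icc a b, ∀ s ∈ Icc a b,
        dist (g i t) (g i s) ≤ (i : ℝ) * |t - s| ^ α) ∧
      γ '' Icc a b ⊆ ⋃ i : ℕ, g i '' Icc a b := by
  classical
  set S : ℕ → Set ℝ := fun n =>
    {t | t ∈ Icc a b ∧ ∀ s ∈ Icc a b, dist (γ t) (γ s) ≤ (n : ℝ) * |t - s| ^ α} with hS
  have hSsub : ∀ n, S n ⊆ Icc a b := fun n t ht => ht.1
  have hcov : ∀ t ∈ Icc a b, ∃ n : ℕ, t ∈ S n := by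
    intro t ht
    obtain ⟨H, hH0, hH⟩ := hHol t ht
    refine ⟨⌈H⌉₊, ht, fun s hs => (hH s hs).trans ?_⟩
    exact mul_le_mul_of_nonneg_right (Nat.le_ceil H) (Real.rpow_nonneg (abs_nonneg _) _)
  have hcoord : ∀ (x y : Euc d) (j : Fin d), |x j - y j| ≤ dist x y := by
    intro x y j
    rw [EuclideanSpace.dist_eq]
    have h1 : |x j - y j| ^ 2 ≤ ∑ i, dist (x i) (y i) ^ 2 := by
      have := Finset.single_le_sum (f := fun i => dist (x i) (y i) ^ 2)
        (fun i _ => sq_nonneg _) (Finset.mem_univ j)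
      simpa [Real.dist_eq] using this
    calc |x j - y j| = Real.sqrt (|x j - y j| ^ 2) := (Real.sqrt_sq (abs_nonneg _)).symm
      _ ≤ _ := Real.sqrt_le_sqrt h1
  have hG : ∀ n : ℕ, ∃ G : ℝ → Euc d,
      (∀ t ∈ S n, G t = γ t) ∧
      ∀ t s : ℝ, dist (G t) (G s) ≤ ((d * n : ℕ) : ℝ) * |t - s| ^ α := by
    intro n
    by_cases hA : (S n).Nonempty
    · have hper : ∀ j : Fin d, ∃ f : ℝ → ℝ, (∀ t ∈ S n, f t = γ t j) ∧
          ∀ t s : ℝ, |f t - f s| ≤ (n : ℝ) * |t - s| ^ α := by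
        intro j
        refine holder_cover_mcshane hα0 hα1 (n : ℝ) (by positivity) a b (S n) (hSsub n) hA
          (fun t => γ t j) ?_
        intro t ht s hs
        exact le_trans (hcoord (γ t) (γ s) j) (ht.2 s hs.1)
      choose f hf1 hf2 using hper
      refine ⟨fun t => ptOf d (fun j => f j t), ?_, ?_⟩
      · intro t ht
        ext j
        simpa [ptOf] using hf1 j t ht
      · intro t s
        rw [EuclideanSpace.dist_eq]
        set c : ℝ := (n : ℝ) * |t - s| ^ α with hcdef
        have hc0 : 0 ≤ c := by positivity
        have hsum : ∑ j, dist (ptOf d (fun j => f j t) j) (ptOf d (fun j => f j s) j) ^ 2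
            ≤ (d : ℝ) * c ^ 2 := by
          calc ∑ j, dist (ptOf d (fun j => f j t) j) (ptOf d (fun j => f j s) j) ^ 2
              ≤ ∑ _j : Fin d, c ^ 2 := by
                apply Finset.sum_le_sum
                intro j _
                have h1 : dist (f j t) (f j s) ≤ c := by
                  rw [Real.dist_eq]; exact hf2 j t s
                simpa [ptOf] using pow_le_pow_left₀ dist_nonneg h1 2
            _ = (d : ℝ) * c ^ 2 := by simp [mul_comm]
        calc Real.sqrt (∑ j, dist (ptOf d (fun j => f j t) j) (ptOf d (fun j => f j s) j) ^ 2)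
            ≤ Real.sqrt (((d : ℝ) * c) ^ 2) := by
              apply Real.sqrt_le_sqrt
              have hd2 : (d : ℝ) ≤ (d : ℝ) ^ 2 := by
                have : (d : ℕ) ≤ d ^ 2 := Nat.le_self_pow (by norm_num) d
                exact_mod_cast this
              nlinarith [sq_nonneg c]
          _ = (d : ℝ) * c := Real.sqrt_sq (by positivity)
          _ = ((d * n : ℕ) : ℝ) * |t - s| ^ α := by push_cast; ring
    · refine ⟨fun _ => γ a, fun t ht => absurd ⟨t, ht⟩ hA, fun t s => ?_⟩
      simp only [dist_self]
      positivity
  choose G hG1 hG2 using hG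
  refine ⟨fun i => G (i / (d + 1)), ?_, ?_⟩
  · intro i t _ s _
    refine le_trans (hG2 (i / (d + 1)) t s) ?_
    apply mul_le_mul_of_nonneg_right _ (Real.rpow_nonneg (abs_nonneg _) _)
    have h1 : d * (i / (d + 1)) ≤ i := by
      calc d * (i / (d + 1)) ≤ (d + 1) * (i / (d + 1)) := Nat.mul_le_mul_right _ (by omega)
        _ = (i / (d + 1)) * (d + 1) := Nat.mul_comm _ _
        _ ≤ i := Nat.div_mul_le_self _ _
    exact_mod_cast h1
  · rintro x ⟨t, ht, rfl⟩
    obtain ⟨n, hn⟩ := hcov t ht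
    apply mem_iUnion.2
    refine ⟨n * (d + 1), t, ht, ?_⟩
    show G (n * (d + 1) / (d + 1)) t = γ t
    rw [Nat.mul_div_cancel n (Nat.succ_pos d)]
    exact hG1 n t hn
end
end
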